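/- arXiv:1709.02790 — 15 statements merged into one kernel-verified Lean document; each statement's English description precedes it below -/
import Mathlib

section
/- Let G be a connected simple graph on vertex set {0,…,N−1} with Laplacian matrix L, and let M be a pseudoinverse of L (M symmetric, M·𝟙 = 0, and L·M = I − (1/N)·J). Then for all vertices j, k one has d_B²(j,k) = ‖M e_j − M e_k‖² (Euclidean norm, where e_j is the j-th standard basis vector), and the function d_B(j,k) = √(d_B²(j,k)) is a metric on the vertex set: it is nonnegative, it vanishes if and only if j = k, it is symmetric, and it satisfies the triangle inequality d_B(j,r) + d_B(r,k) ≥ d_B(j,k) for all vertices j, r, k. -/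
open Matrix Finset

/-- Squared biharmonic distance between vertices `j` and `k`, in terms of a
pseudoinverse `M` of the graph Laplacian. -/
noncomputable def biharmSq {N : ℕ} (M : Matrix (Fin N) (Fin N) ℝ) (j k : Fin N) : ℝ :=
  (M * M) j j + (M * M) k k - 2 * (M * M) j k

/-- Biharmonic distance. -/
noncomputable def biharm {N : ℕ} (M : Matrix (Fin N) (Fin N) ℝ) (j k : Fin N) : ℝ :=
  Real.sqrt (biharmSq M j k)

theorem biharmonic_is_metric (N : ℕ) (hN : 0 < N)
    (G : SimpleGraph (Fin N)) [DecidableRel G.Adj] (hG : G.Connected)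
    (L M : Matrix (Fin N) (Fin N) ℝ)
    (hL : L = G.lapMatrix ℝ)
    (hMsymm : M.IsSymm)
    (hM1 : M.mulVec (fun _ => (1 : ℝ)) = 0)
    (hLM : L * M = 1 - (N : ℝ)⁻¹ • Matrix.of (fun _ _ => (1 : ℝ))) :
    (∀ j k : Fin N,
      biharmSq M j k
        = ∑ i, (M.mulVec (Pi.single j 1) i - M.mulVec (Pi.single k 1) i) ^ 2) ∧
    (∀ j k : Fin N, 0 ≤ biharm M j k) ∧
    (∀ j k : Fin N, biharm M j k = 0 ↔ j = k) ∧
    (∀ j k : Fin N, biharm M j k = biharm M k j) ∧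
    (∀ j r k : Fin N, biharm M j k ≤ biharm M j r + biharm M r k) := by
  -- columns of M
  have hmv : ∀ (j i : Fin N), M.mulVec (Pi.single j 1) i = M i j := by
    intro j i
    simp [Matrix.mulVec, dotProduct, Pi.single_apply]
  have hsymm : ∀ i j : Fin N, M i j = M j i := by
    intro i j
    have := congrFun (congrFun hMsymm j) i
    simpa [Matrix.transpose_apply] using this
  have hMM : ∀ j k : Fin N, (M * M) j k = ∑ i, M i j * M i k := by
    intro j k
    rw [Matrix.mul_apply]
    exact Finset.sum_congr rfl fun i _ => by rw [hsymm j i]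
  have hsq : ∀ j k : Fin N, biharmSq M j k = ∑ i, (M i j - M i k) ^ 2 := by
    intro j k
    unfold biharmSq
    rw [hMM, hMM, hMM]
    rw [← Finset.sum_add_distrib, Finset.mul_sum, ← Finset.sum_sub_distrib]
    exact Finset.sum_congr rfl fun i _ => by ring
  -- the Euclidean embedding
  set g : Fin N → EuclideanSpace ℝ (Fin N) := fun j => WithLp.toLp 2 (fun i => M i j) with hg
  have hdist : ∀ j k : Fin N, biharm M j k = dist (g j) (g k) := by
    intro j k
    have h1 : ∀ i, dist (g j i) (g k i) ^ 2 = (M i j - M i k) ^ 2 := fun i => by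
      rw [Real.dist_eq, sq_abs]
    rw [EuclideanSpace.dist_eq, biharm, hsq,
      Finset.sum_congr rfl fun i _ => (h1 i).symm]
  have hginj : Function.Injective g := by
    intro j k hjk
    by_contra hne
    have hcol : ∀ i, M i j = M i k := fun i => congrArg (fun v : EuclideanSpace ℝ (Fin N) => v i) hjk
    have heq : (L * M) j j = (L * M) j k := by
      rw [Matrix.mul_apply, Matrix.mul_apply]
      exact Finset.sum_congr rfl fun i _ => by rw [hcol i]
    rw [hLM] at heq
    simp [Matrix.sub_apply, Matrix.one_apply, hne, Matrix.smul_apply] at heq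
  refine ⟨?_, ?_, ?_, ?_, ?_⟩
  · intro j k
    rw [hsq]
    exact Finset.sum_congr rfl fun i _ => by rw [hmv, hmv]
  · intro j k
    rw [hdist]; exact dist_nonneg
  · intro j k
    rw [hdist, dist_eq_zero]
    exact ⟨fun h => hginj h, fun h => by rw [h]⟩
  · intro j k
    rw [hdist, hdist, dist_comm]
  · intro j r k
    rw [hdist, hdist, hdist]
    exact dist_triangle _ _ _
end

section
/- Let λ > 0 and c be real numbers, let P be the 2×2 real matrix P = [[0, 1], [−λ, −λ]], and let Z = [[c, 0], [0, 0]]. If Θ is any 2×2 real matrix satisfying the Lyapunov equation Pᵀ·Θ + Θ·P + Z = 0, then the (2,2) entry of Θ equals c/(2λ²). -/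
open Matrix

theorem lyapunov_2x2_entry (l c : ℝ) (hl : 0 < l)
    (P Z Θ : Matrix (Fin 2) (Fin 2) ℝ)
    (hP : P = !![0, 1; -l, -l])
    (hZ : Z = !![c, 0; 0, 0])
    (hLyap : Pᵀ * Θ + Θ * P + Z = 0) :
    Θ 1 1 = c / (2 * l ^ 2) := by
  subst hP hZ
  have h00 := congrFun (congrFun hLyap 0) 0
  have h11 := congrFun (congrFun hLyap 1) 1
  simp [Matrix.mul_apply, Matrix.add_apply, Fin.sum_univ_two, Matrix.vecHead, Matrix.vecTail] at h00 h11
  have hl2 : (2 : ℝ) * l ^ 2 ≠ 0 := by positivity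
  field_simp
  nlinarith [h00, h11]
end

section
/- Let N ≥ 2, let λ : {1,…,N−1} → ℝ be positive reals, and let Q be an (N−1)×N real matrix with Q·Qᵀ = I. Fix vertices j, k ∈ {0,…,N−1} and set q = Q·(e_j − e_k) ∈ ℝ^{N−1}. Let D = diag(λ₁,…,λ_{N−1}), let M be the 2(N−1)×2(N−1) block matrix M = [[0, I], [−D, −D]], let Z be the block matrix Z = [[q·qᵀ, 0], [0, 0]], and let B be the 2(N−1)×N block matrix B = [[0], [Q]]. If Σ is any 2(N−1)×2(N−1) real matrix satisfying the Lyapunov equation Mᵀ·Σ + Σ·M + Z = 0, then trace(Bᵀ·Σ·B) = Σ_{i=1}^{N−1} (Q_{ij} − Q_{ik})²/(2λ_i²). -/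
open Matrix Finset

theorem h2_norm_pairwise_variance (N : ℕ) (hN : 2 ≤ N)
    (lam : Fin (N - 1) → ℝ) (hlam : ∀ i, 0 < lam i)
    (Q : Matrix (Fin (N - 1)) (Fin N) ℝ) (hQ : Q * Qᵀ = 1)
    (j k : Fin N)
    (q : Fin (N - 1) → ℝ)
    (hq : q = Q.mulVec (Pi.single j 1 - Pi.single k 1))
    (M Z S : Matrix (Fin (N - 1) ⊕ Fin (N - 1)) (Fin (N - 1) ⊕ Fin (N - 1)) ℝ)
    (hM : M = Matrix.fromBlocks 0 1 (-(Matrix.diagonal lam)) (-(Matrix.diagonal lam)))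
    (hZ : Z = Matrix.fromBlocks (Matrix.vecMulVec q q) 0 0 0)
    (B : Matrix (Fin (N - 1) ⊕ Fin (N - 1)) (Fin N) ℝ)
    (hB : B = Matrix.fromRows 0 Q)
    (hLyap : Mᵀ * S + S * M + Z = 0) :
    (Bᵀ * S * B).trace = ∑ i, (Q i j - Q i k) ^ 2 / (2 * lam i ^ 2) := by
  have hq' : ∀ i, q i = Q i j - Q i k := by
    intro i
    simp [hq, Matrix.mulVec, dotProduct, Pi.sub_apply, Pi.single_apply, mul_sub,
      Finset.sum_sub_distrib, mul_ite]
  have key : ∀ i, S (Sum.inr i) (Sum.inr i) = (Q i j - Q i k) ^ 2 / (2 * lam i ^ 2) := by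
    intro i
    have h1 := congrFun (congrFun hLyap (Sum.inl i)) (Sum.inl i)
    have h2 := congrFun (congrFun hLyap (Sum.inr i)) (Sum.inr i)
    simp only [hM, hZ, Matrix.add_apply, Matrix.mul_apply, Fintype.sum_sum_type,
      Matrix.transpose_apply, Matrix.fromBlocks_apply₁₁, Matrix.fromBlocks_apply₁₂,
      Matrix.fromBlocks_apply₂₁, Matrix.fromBlocks_apply₂₂, Matrix.neg_apply,
      Matrix.diagonal_apply, Matrix.one_apply, Matrix.zero_apply, Matrix.vecMulVec_apply,
      Matrix.zero_apply, ite_mul, mul_ite, zero_mul, mul_zero, neg_mul, mul_neg,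
      Finset.sum_ite_eq, Finset.sum_ite_eq', Finset.mem_univ, if_true, neg_zero,
      Finset.sum_neg_distrib, zero_add, add_zero, Finset.sum_const_zero,
      Pi.zero_apply] at h1 h2
    have hl := (hlam i).ne'
    rw [← hq' i]
    field_simp
    linear_combination (-(lam i)) * h2 - h1
  have hBB : B * Bᵀ = Matrix.fromBlocks 0 0 0 1 := by
    rw [hB, Matrix.transpose_fromRows, Matrix.fromRows_mul_fromCols]
    simp [hQ]
  have htr : (Bᵀ * S * B).trace = ∑ i, S (Sum.inr i) (Sum.inr i) := by
    rw [Matrix.trace_mul_comm, ← Matrix.mul_assoc, hBB,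
      ← Matrix.fromBlocks_toBlocks S, Matrix.fromBlocks_multiply]
    simp [Matrix.trace, Matrix.diag, Fintype.sum_sum_type, Matrix.toBlocks₂₂,
      Matrix.fromBlocks_apply₁₁, Matrix.fromBlocks_apply₂₂]
  rw [htr]
  exact Finset.sum_congr rfl fun i _ => key i
end

section
/- Let N ≥ 2, let λ : {1,…,N−1} → ℝ be positive reals, and let Q be an (N−1)×N real matrix with Q·Qᵀ = I. Fix a vertex j ∈ {0,…,N−1} and set q = Q·e_j ∈ ℝ^{N−1}. Let D = diag(λ₁,…,λ_{N−1}), let M be the 2(N−1)×2(N−1) block matrix M = [[0, I], [−D, −D]], let Z be the block matrix Z = [[q·qᵀ, 0], [0, 0]], and let B be the 2(N−1)×N block matrix B = [[0], [Q]]. If Σ is any 2(N−1)×2(N−1) real matrix satisfying the Lyapunov equation Mᵀ·Σ + Σ·M + Z = 0, then trace(Bᵀ·Σ·B) = Σ_{i=1}^{N−1} Q_{ij}²/(2λ_i²). -/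
open Matrix Finset

theorem h2_norm_vertex_variance (N : ℕ) (hN : 2 ≤ N)
    (lam : Fin (N - 1) → ℝ) (hlam : ∀ i, 0 < lam i)
    (Q : Matrix (Fin (N - 1)) (Fin N) ℝ) (hQ : Q * Qᵀ = 1)
    (j : Fin N)
    (q : Fin (N - 1) → ℝ)
    (hq : q = Q.mulVec (Pi.single j 1))
    (M Z S : Matrix (Fin (N - 1) ⊕ Fin (N - 1)) (Fin (N - 1) ⊕ Fin (N - 1)) ℝ)
    (hM : M = Matrix.fromBlocks 0 1 (-(Matrix.diagonal lam)) (-(Matrix.diagonal lam)))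
    (hZ : Z = Matrix.fromBlocks (Matrix.vecMulVec q q) 0 0 0)
    (B : Matrix (Fin (N - 1) ⊕ Fin (N - 1)) (Fin N) ℝ)
    (hB : B = Matrix.fromRows 0 Q)
    (hLyap : Mᵀ * S + S * M + Z = 0) :
    (Bᵀ * S * B).trace = ∑ i, (Q i j) ^ 2 / (2 * lam i ^ 2) := by
  subst hM hZ hB hq
  have hqv : ∀ i, Q.mulVec (Pi.single j 1) i = Q i j := by
    intro i
    simp [Matrix.mulVec, dotProduct, Pi.single_apply, mul_ite]
  have key : ∀ i, S (Sum.inr i) (Sum.inr i) = (Q i j) ^ 2 / (2 * lam i ^ 2) := by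
    intro i
    have h1 := congrFun (congrFun hLyap (Sum.inl i)) (Sum.inl i)
    have h2 := congrFun (congrFun hLyap (Sum.inr i)) (Sum.inr i)
    simp [Matrix.mul_apply, Fintype.sum_sum_type, Matrix.vecMulVec_apply, hqv,
      Matrix.diagonal_apply, Matrix.one_apply, ite_mul, mul_ite] at h1 h2
    have hl := (hlam i).ne'
    field_simp
    linear_combination -h1 - lam i * h2
  have hBB : Matrix.fromRows (0 : Matrix (Fin (N-1)) (Fin N) ℝ) Q * (Matrix.fromRows 0 Q)ᵀ
      = Matrix.fromBlocks (0 : Matrix (Fin (N-1)) (Fin (N-1)) ℝ) 0 0 (1 : Matrix (Fin (N-1)) (Fin (N-1)) ℝ) := by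
    rw [Matrix.transpose_fromRows, Matrix.fromRows_mul_fromCols]
    simp [hQ]
  rw [Matrix.trace_mul_cycle, hBB, ← Matrix.fromBlocks_toBlocks S,
    Matrix.fromBlocks_multiply]
  simp [Matrix.trace, Matrix.diag, Fintype.sum_sum_type, Matrix.toBlocks₂₂, key]
end

section
/- Let m ≥ 1 and let λ : {1,…,m} → ℝ be positive reals. Let D = diag(λ₁,…,λ_m), let M be the 2m×2m block matrix M = [[0, I], [−D, −D]], and let Z be the block matrix Z = [[I, 0], [0, 0]]. If Σ is any 2m×2m real matrix satisfying the Lyapunov equation Mᵀ·Σ + Σ·M + Z = 0, then the trace of the lower-right m×m block of Σ equals Σ_{i=1}^{m} 1/(2λ_i²). -/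
open Matrix Finset

theorem h2_norm_total_variance (m : ℕ) (hm : 1 ≤ m)
    (lam : Fin m → ℝ) (hlam : ∀ i, 0 < lam i)
    (M Z S : Matrix (Fin m ⊕ Fin m) (Fin m ⊕ Fin m) ℝ)
    (hM : M = Matrix.fromBlocks 0 1 (-(Matrix.diagonal lam)) (-(Matrix.diagonal lam)))
    (hZ : Z = Matrix.fromBlocks 1 0 0 0)
    (hLyap : Mᵀ * S + S * M + Z = 0) :
    (S.toBlocks₂₂).trace = ∑ i, 1 / (2 * lam i ^ 2) := by
  set A := S.toBlocks₁₁ with hA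
  set B := S.toBlocks₁₂ with hB
  set C := S.toBlocks₂₁ with hC
  set D := S.toBlocks₂₂ with hD
  have hS : S = Matrix.fromBlocks A B C D := (Matrix.fromBlocks_toBlocks S).symm
  rw [hM, hZ, hS] at hLyap
  rw [Matrix.fromBlocks_transpose, Matrix.fromBlocks_multiply,
    Matrix.fromBlocks_multiply, Matrix.fromBlocks_add, Matrix.fromBlocks_add] at hLyap
  have e11 := congrArg Matrix.toBlocks₁₁ hLyap
  have e22 := congrArg Matrix.toBlocks₂₂ hLyap
  simp [Matrix.toBlocks_fromBlocks₁₁, Matrix.toBlocks_fromBlocks₂₂] at e11 e22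
  have key : ∀ i, D i i = 1 / (2 * lam i ^ 2) := by
    intro i
    have h1 := congrFun (congrFun e11 i) i
    have h2 := congrFun (congrFun e22 i) i
    simp [Matrix.add_apply, Matrix.mul_apply, Matrix.neg_apply, Matrix.diagonal,
      Matrix.one_apply, Finset.mul_sum, Finset.sum_ite_eq, Finset.sum_ite_eq', Matrix.toBlocks₁₁, Matrix.toBlocks₂₂] at h1 h2
    have hl := hlam i
    field_simp
    nlinarith [h1, h2]
  unfold Matrix.trace
  simp only [Matrix.diag_apply, key]
end

section
/- Let N ≥ 2 and let G be the complete graph on vertex set {0,…,N−1} (every two distinct vertices are adjacent), with Laplacian matrix L. Let M be a pseudoinverse of L (M symmetric, M·𝟙 = 0, and L·M = I − (1/N)·J). Then for all vertices j ≠ k, the squared biharmonic distance satisfies d_B²(j,k) = 2/N². -/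
open Matrix Finset

theorem biharmonic_complete_graph (N : ℕ) (hN : 2 ≤ N)
    (G : SimpleGraph (Fin N)) [DecidableRel G.Adj]
    (hG : ∀ a b : Fin N, G.Adj a b ↔ a ≠ b)
    (L M : Matrix (Fin N) (Fin N) ℝ)
    (hL : L = G.lapMatrix ℝ)
    (hMsymm : M.IsSymm)
    (hM1 : M.mulVec (fun _ => (1 : ℝ)) = 0)
    (hLM : L * M = 1 - (N : ℝ)⁻¹ • Matrix.of (fun _ _ => (1 : ℝ))) :
    ∀ j k : Fin N, j ≠ k → biharmSq M j k = 2 / (N : ℝ) ^ 2 := by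
  have hN0 : (N : ℝ) ≠ 0 := by positivity
  -- row sums of M are zero
  have hrow : ∀ i : Fin N, ∑ l, M i l = 0 := by
    intro i
    have := congrFun hM1 i
    simpa [Matrix.mulVec, dotProduct] using this
  have hsymm : ∀ i l, M l i = M i l := by
    intro i l
    have := congrFun (congrFun hMsymm i) l
    simpa [Matrix.transpose_apply] using this
  have hcol : ∀ j : Fin N, ∑ l, M l j = 0 := by
    intro j
    calc ∑ l, M l j = ∑ l, M j l := by simp [hsymm]
    _ = 0 := hrow j
  -- Laplacian entries of the complete graph
  have hdeg : ∀ i : Fin N, G.degree i = N - 1 := by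
    intro i
    rw [SimpleGraph.degree, SimpleGraph.neighborFinset]
    have : ({i}ᶜ : Finset (Fin N)).card = N - 1 := by
      simp [Finset.card_compl]
    rw [← this]
    congr 1
    ext x
    simp [SimpleGraph.mem_neighborFinset, hG, ne_comm, eq_comm]
  have hLentry : ∀ i l : Fin N, L i l = (N : ℝ) * (if i = l then 1 else 0) - 1 := by
    intro i l
    rw [hL]
    by_cases h : i = l
    · subst h
      simp [SimpleGraph.lapMatrix, SimpleGraph.degMatrix, hdeg, hG]
      push_cast [Nat.cast_sub (by omega : 1 ≤ N)]
      ring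
    · simp [SimpleGraph.lapMatrix, SimpleGraph.degMatrix, SimpleGraph.adjMatrix, h, hG]
  -- value of M
  have hM : ∀ i l : Fin N, M i l = (N : ℝ)⁻¹ * ((if i = l then 1 else 0) - (N : ℝ)⁻¹) := by
    intro i l
    have h1 : (L * M) i l = (N : ℝ) * M i l := by
      rw [Matrix.mul_apply]
      have : ∀ l', L i l' * M l' l = (N : ℝ) * ((if i = l' then 1 else 0) * M l' l) - M l' l := by
        intro l'
        rw [hLentry]
        ring
      rw [Finset.sum_congr rfl (fun l' _ => this l')]
      rw [Finset.sum_sub_distrib, hcol, ← Finset.mul_sum]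
      simp [Finset.sum_ite_eq, Finset.mem_univ]
    have h2 : (L * M) i l = (if i = l then 1 else 0) - (N : ℝ)⁻¹ := by
      rw [hLM]
      simp [Matrix.one_apply]
    rw [h2] at h1
    field_simp at h1 ⊢
    linarith [h1]
  -- value of M * M
  have hMM : ∀ a b : Fin N, (M * M) a b
      = (N : ℝ)⁻¹ ^ 2 * ((if a = b then 1 else 0) - (N : ℝ)⁻¹) := by
    intro a b
    rw [Matrix.mul_apply]
    have : ∀ l, M a l * M l b =
        (N : ℝ)⁻¹ ^ 2 * ((if a = l then 1 else 0) * (if l = b then 1 else 0)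
          - (N : ℝ)⁻¹ * (if a = l then 1 else 0)
          - (N : ℝ)⁻¹ * (if l = b then 1 else 0) + (N : ℝ)⁻¹ ^ 2) := by
      intro l
      rw [hM, hM]
      ring
    rw [Finset.sum_congr rfl (fun l _ => this l), ← Finset.mul_sum]
    congr 1
    have e1 : ∑ l, (if a = l then 1 else 0) * (if l = b then (1:ℝ) else 0)
        = if a = b then 1 else 0 := by
      simp [Finset.sum_ite_eq, Finset.mem_univ]
    rw [Finset.sum_add_distrib, Finset.sum_sub_distrib, Finset.sum_sub_distrib, e1,
      ← Finset.mul_sum, ← Finset.mul_sum]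
    simp [Finset.sum_ite_eq, Finset.sum_ite_eq', Finset.mem_univ, Finset.card_univ]
    field_simp
    ring
  intro j k hjk
  unfold biharmSq
  rw [hMM, hMM, hMM]
  simp [hjk]
  field_simp
  ring
end

section
/- Let N ≥ 2 and let G be the star graph on vertex set {0,…,N−1}, in which vertex 0 (the hub) is adjacent to every other vertex and there are no other edges, with Laplacian matrix L. Let M be a pseudoinverse of L (M symmetric, M·𝟙 = 0, and L·M = I − (1/N)·J). Then for every leaf vertex j ∈ {1,…,N−1}, the squared biharmonic distance between the hub and j satisfies d_B²(0,j) = (N−1)/N. -/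
open Matrix Finset

lemma sum_split_aux {N : ℕ} (u v : Fin N) (f : Fin N → ℝ) (Cc Aa Bb : ℝ) (huv : u ≠ v)
    (hf : ∀ i, f i = Cc + Aa * (if i = u then 1 else 0) + Bb * (if i = v then 1 else 0)) :
    ∑ i, f i = N * Cc + Aa + Bb := by
  rw [Finset.sum_congr rfl fun i _ => hf i]
  rw [Finset.sum_add_distrib, Finset.sum_add_distrib, ← Finset.mul_sum, ← Finset.mul_sum,
    Finset.sum_const, Finset.card_univ, Fintype.card_fin, nsmul_eq_mul]
  simp [mul_comm]

theorem biharmonic_star_hub_leaf (N : ℕ) (hN : 2 ≤ N)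
    (G : SimpleGraph (Fin N)) [DecidableRel G.Adj]
    (hub : Fin N) (hhub : hub.val = 0)
    (hG : ∀ a b : Fin N, G.Adj a b ↔ ((a = hub ∧ b ≠ hub) ∨ (b = hub ∧ a ≠ hub)))
    (L M : Matrix (Fin N) (Fin N) ℝ)
    (hL : L = G.lapMatrix ℝ)
    (hMsymm : M.IsSymm)
    (hM1 : M.mulVec (fun _ => (1 : ℝ)) = 0)
    (hLM : L * M = 1 - (N : ℝ)⁻¹ • Matrix.of (fun _ _ => (1 : ℝ))) :
    ∀ j : Fin N, j ≠ hub → biharmSq M hub j = ((N : ℝ) - 1) / N := by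
  have hN0 : (N : ℝ) ≠ 0 := by positivity
  have hsymm : ∀ x y : Fin N, M x y = M y x := fun x y => (hMsymm.apply x y).symm
  have hadj : ∀ j : Fin N, j ≠ hub → ∀ i, G.Adj j i ↔ i = hub := by
    intro j hj i
    rw [hG]
    constructor
    · rintro (⟨h1, _⟩ | ⟨h1, _⟩)
      · exact absurd h1 hj
      · exact h1
    · intro h; exact Or.inr ⟨h, hj⟩
  have hnbr : ∀ j : Fin N, j ≠ hub → G.neighborFinset j = {hub} := by
    intro j hj
    ext i
    simp [SimpleGraph.mem_neighborFinset, hadj j hj]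
  have hLrow : ∀ j : Fin N, j ≠ hub → ∀ i,
      L j i = (if i = j then (1:ℝ) else 0) - (if i = hub then 1 else 0) := by
    intro j hj i
    rw [hL]
    simp only [SimpleGraph.lapMatrix, SimpleGraph.degMatrix, Matrix.sub_apply,
      Matrix.diagonal_apply, SimpleGraph.adjMatrix_apply, SimpleGraph.degree,
      hnbr j hj, Finset.card_singleton, hadj j hj]
    by_cases h : j = i <;> by_cases h2 : i = hub <;> simp [h, h2, eq_comm]
  have key : ∀ j : Fin N, j ≠ hub → ∀ c,
      M j c = M hub c + (if j = c then (1:ℝ) else 0) - 1/N := by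
    intro j hj c
    have h := congrFun (congrFun hLM j) c
    rw [Matrix.mul_apply] at h
    simp only [Matrix.sub_apply, Matrix.one_apply, Matrix.smul_apply, Matrix.of_apply,
      smul_eq_mul, mul_one] at h
    rw [Finset.sum_congr rfl (fun i _ => by rw [hLrow j hj i, sub_mul])] at h
    rw [Finset.sum_sub_distrib] at h
    simp only [ite_mul, one_mul, zero_mul, Finset.sum_ite_eq, Finset.sum_ite_eq',
      Finset.mem_univ, if_true] at h
    rw [one_div]
    linarith [h]
  have hrow : ∀ x : Fin N, ∑ c, M x c = 0 := by
    intro x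
    have h := congrFun hM1 x
    simpa [Matrix.mulVec, dotProduct] using h
  have hNcard : (Finset.univ.erase hub).card = N - 1 := by
    rw [Finset.card_erase_of_mem (Finset.mem_univ _), Finset.card_univ, Fintype.card_fin]
  have hcast : ((N - 1 : ℕ) : ℝ) = (N : ℝ) - 1 := by
    have : (1:ℕ) ≤ N := by omega
    push_cast [this]; ring
  have hhubhub : M hub hub = ((N:ℝ) - 1) / N^2 := by
    have hsum := hrow hub
    rw [← Finset.add_sum_erase _ _ (Finset.mem_univ hub)] at hsum
    have heq : ∀ c ∈ Finset.univ.erase hub, M hub c = M hub hub - 1/N := by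
      intro c hc
      have hc' : c ≠ hub := Finset.ne_of_mem_erase hc
      rw [hsymm hub c, key c hc' hub, if_neg hc']
      ring
    rw [Finset.sum_congr rfl heq, Finset.sum_const, hNcard, nsmul_eq_mul, hcast] at hsum
    have h2 : (N:ℝ) * M hub hub * (N:ℝ) = ((N:ℝ) - 1) := by
      field_simp at hsum
      nlinarith [hsum]
    rw [eq_div_iff (by positivity : ((N:ℝ)^2) ≠ 0)]
    nlinarith [h2]
  have hval : ∀ x y : Fin N, M x y =
      if x = hub then (if y = hub then ((N:ℝ)-1)/N^2 else (-1:ℝ)/N^2)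
      else (if y = hub then (-1:ℝ)/N^2
            else (if x = y then (1:ℝ) else 0) - 1/N - 1/N^2) := by
    intro x y
    have e : ((N:ℝ)-1)/N^2 - 1/N = (-1:ℝ)/N^2 := by
      field_simp
      ring
    by_cases hx : x = hub
    · rw [if_pos hx]
      by_cases hy : y = hub
      · rw [if_pos hy, hx, hy, hhubhub]
      · rw [if_neg hy, hx, hsymm hub y, key y hy hub, if_neg hy, hhubhub]
        linear_combination e
    · rw [if_neg hx, key x hx y]
      by_cases hy : y = hub
      · rw [if_pos hy, hy, hhubhub, if_neg (hy ▸ hx)]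
        linear_combination e
      · rw [if_neg hy, hsymm hub y, key y hy hub, if_neg hy, hhubhub]
        linear_combination e
  intro j hj
  have hj' : ¬ j = hub := hj
  have hj'' : ¬ hub = j := fun h => hj h.symm
  -- three entries of M * M
  have hsum1 : (M * M) hub hub
      = N * ((-1:ℝ)/N^2)^2 + ((((N:ℝ)-1)/N^2)^2 - ((-1:ℝ)/N^2)^2) + 0 := by
    rw [Matrix.mul_apply]
    apply sum_split_aux hub j _ _ _ _ (fun h => hj h.symm)
    intro i
    rw [hval hub i, hval i hub]
    by_cases h : i = hub
    · subst h
      simp only [eq_self_iff_true, if_true, hj', hj'', if_false]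
      ring
    · by_cases h2 : i = j
      · subst h2
        simp only [eq_self_iff_true, if_true, h, hj', hj'', if_false]
        ring
      · have h3 : ¬ j = i := fun hh => h2 hh.symm
        simp only [eq_self_iff_true, if_true, h, h2, h3, hj', hj'', if_false]
        ring
  have hsum2 : (M * M) j j
      = N * ((-1:ℝ)/N - 1/N^2)^2
        + (((-1:ℝ)/N^2)^2 - ((-1:ℝ)/N - 1/N^2)^2)
        + (((1:ℝ) - 1/N - 1/N^2)^2 - ((-1:ℝ)/N - 1/N^2)^2) := by
    rw [Matrix.mul_apply]
    apply sum_split_aux hub j _ _ _ _ (fun h => hj h.symm)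
    intro i
    rw [hval j i, hval i j]
    by_cases h : i = hub
    · subst h
      simp only [eq_self_iff_true, if_true, hj', hj'', if_false]
      ring
    · by_cases h2 : i = j
      · subst h2
        simp only [eq_self_iff_true, if_true, h, hj', hj'', if_false]
        ring
      · have h3 : ¬ j = i := fun hh => h2 hh.symm
        simp only [eq_self_iff_true, if_true, h, h2, h3, hj', hj'', if_false]
        ring
  have hsum3 : (M * M) hub j
      = N * (((-1:ℝ)/N^2) * ((-1:ℝ)/N - 1/N^2))
        + ((((N:ℝ)-1)/N^2) * ((-1:ℝ)/N^2) - ((-1:ℝ)/N^2) * ((-1:ℝ)/N - 1/N^2))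
        + (((-1:ℝ)/N^2) * ((1:ℝ) - 1/N - 1/N^2)
            - ((-1:ℝ)/N^2) * ((-1:ℝ)/N - 1/N^2)) := by
    rw [Matrix.mul_apply]
    apply sum_split_aux hub j _ _ _ _ (fun h => hj h.symm)
    intro i
    rw [hval hub i, hval i j]
    by_cases h : i = hub
    · subst h
      simp only [eq_self_iff_true, if_true, hj', hj'', if_false]
      ring
    · by_cases h2 : i = j
      · subst h2
        simp only [eq_self_iff_true, if_true, h, hj', hj'', if_false]
        ring
      · have h3 : ¬ j = i := fun hh => h2 hh.symm
        simp only [eq_self_iff_true, if_true, h, h2, h3, hj', hj'', if_false]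
        ring
  rw [biharmSq, hsum1, hsum2, hsum3]
  field_simp
  ring
end

section
/- Let N ≥ 3 and let G be the star graph on vertex set {0,…,N−1}, in which vertex 0 (the hub) is adjacent to every other vertex and there are no other edges, with Laplacian matrix L. Let M be a pseudoinverse of L (M symmetric, M·𝟙 = 0, and L·M = I − (1/N)·J). Then for all distinct leaf vertices j, k ∈ {1,…,N−1}, the squared biharmonic distance satisfies d_B²(j,k) = 2. -/
open Matrix Finset

theorem biharmonic_star_leaf_leaf (N : ℕ) (hN : 3 ≤ N)
    (G : SimpleGraph (Fin N)) [DecidableRel G.Adj]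
    (hub : Fin N) (hhub : hub.val = 0)
    (hG : ∀ a b : Fin N, G.Adj a b ↔ ((a = hub ∧ b ≠ hub) ∨ (b = hub ∧ a ≠ hub)))
    (L M : Matrix (Fin N) (Fin N) ℝ)
    (hL : L = G.lapMatrix ℝ)
    (hMsymm : M.IsSymm)
    (hM1 : M.mulVec (fun _ => (1 : ℝ)) = 0)
    (hLM : L * M = 1 - (N : ℝ)⁻¹ • Matrix.of (fun _ _ => (1 : ℝ))) :
    ∀ j k : Fin N, j ≠ hub → k ≠ hub → j ≠ k → biharmSq M j k = 2 := by
  intro j k hj hk hjk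
  have hN0 : (N : ℝ) ≠ 0 := by positivity
  set u : Fin N → ℝ := Pi.single j 1 - Pi.single k 1 with hu
  have huj : u j = 1 := by simp [hu, Pi.single_apply, hjk.symm]
  have huk : u k = -1 := by simp [hu, Pi.single_apply, hjk]
  have huhub : u hub = 0 := by
    simp [hu, Pi.single_apply, (Ne.symm hj), (Ne.symm hk)]
  have husum : ∑ i, u i = 0 := by
    simp [hu, Finset.sum_sub_distrib, Finset.sum_pi_single]
  -- degrees and neighborhoods
  have hnbr : ∀ i : Fin N, i ≠ hub → G.neighborFinset i = {hub} := by
    intro i hi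
    ext b
    simp only [SimpleGraph.mem_neighborFinset, hG, Finset.mem_singleton]
    constructor
    · rintro (⟨h1, h2⟩ | ⟨h1, h2⟩)
      · exact absurd h1 hi
      · exact h1
    · rintro rfl; exact Or.inr ⟨rfl, hi⟩
  have hdeg : ∀ i : Fin N, i ≠ hub → G.degree i = 1 := by
    intro i hi
    rw [SimpleGraph.degree, hnbr i hi, Finset.card_singleton]
  have hnbrhub : G.neighborFinset hub = Finset.univ.erase hub := by
    ext b
    simp only [SimpleGraph.mem_neighborFinset, hG, Finset.mem_erase, Finset.mem_univ, and_true]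
    tauto
  -- L *ᵥ u = u
  have hLu : L *ᵥ u = u := by
    ext i
    rw [hL, SimpleGraph.lapMatrix_mulVec_apply]
    by_cases hi : i = hub
    · subst hi
      rw [hnbrhub, Finset.sum_erase _ (by rw [huhub]), husum, huhub]
      ring
    · rw [hnbr i hi, hdeg i hi, Finset.sum_singleton, huhub]
      push_cast
      ring
  -- L *ᵥ (M *ᵥ u) = u
  have hLMu : L *ᵥ (M *ᵥ u) = u := by
    rw [mulVec_mulVec, hLM, sub_mulVec, one_mulVec, smul_mulVec]
    have : (Matrix.of (fun _ _ => (1 : ℝ)) : Matrix (Fin N) (Fin N) ℝ) *ᵥ u = 0 := by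
      ext i
      simp [mulVec, dotProduct, husum]
    rw [this]
    simp
  -- w := M *ᵥ u - u is in kernel of L, hence constant
  set w : Fin N → ℝ := M *ᵥ u - u with hw
  have hLw : G.lapMatrix ℝ *ᵥ w = 0 := by
    rw [hw, mulVec_sub, ← hL, hLu, hLMu, sub_self]
  have hwconst : ∀ i, w i = w hub := by
    have h0 : Matrix.toLin' (G.lapMatrix ℝ) w = 0 := by
      rw [Matrix.toLin'_apply, hLw]
    have := (SimpleGraph.lapMatrix_mulVec_eq_zero_iff_forall_adj G (x := w)).mp hLw
    intro i
    by_cases hi : i = hub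
    · rw [hi]
    · exact this i hub ((hG i hub).mpr (Or.inr ⟨rfl, hi⟩))
  -- sum of w is zero
  have hMusum : ∑ i, (M *ᵥ u) i = 0 := by
    have hcol : ∀ m, ∑ i, M i m = 0 := by
      intro m
      have := congrFun hM1 m
      simp only [mulVec, dotProduct, mul_one, Pi.zero_apply] at this
      calc ∑ i, M i m = ∑ i, M m i := by
            refine Finset.sum_congr rfl fun i _ => ?_
            have := congrFun (congrFun hMsymm m) i
            simpa [Matrix.transpose_apply] using this
        _ = 0 := this
    calc ∑ i, (M *ᵥ u) i = ∑ m, (∑ i, M i m) * u m := by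
          simp_rw [mulVec, dotProduct, Finset.sum_mul]
          rw [Finset.sum_comm]
      _ = 0 := by simp [hcol]
  have hwsum : ∑ i, w i = 0 := by
    simp [hw, Finset.sum_sub_distrib, hMusum, husum]
  have hwhub : w hub = 0 := by
    have : ∑ i, w i = (N : ℝ) * w hub := by
      rw [Finset.sum_congr rfl fun i _ => hwconst i]
      simp [Finset.card_univ, mul_comm]
    have h2 : (N : ℝ) * w hub = 0 := by rw [← this, hwsum]
    exact (mul_eq_zero.mp h2).resolve_left hN0
  have hMu : M *ᵥ u = u := by
    have : w = 0 := by
      funext i; rw [hwconst i, hwhub]; rfl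
    have h := congrArg (· + u) this
    simpa [hw] using h
  -- (M*M) *ᵥ u = u
  have hMMu : (M * M) *ᵥ u = u := by
    rw [← mulVec_mulVec, hMu, hMu]
  -- read off entries
  have hjEq := congrFun hMMu j
  have hkEq := congrFun hMMu k
  have happly : ∀ i : Fin N, ((M * M) *ᵥ u) i = (M * M) i j - (M * M) i k := by
    intro i
    simp [hu, mulVec_sub, Matrix.mulVec_single, mul_one]
  rw [happly, huj] at hjEq
  rw [happly, huk] at hkEq
  have hsymm : (M * M) k j = (M * M) j k := by
    have h1 := congrFun (congrFun hMsymm j) k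
    have h2 := congrFun (congrFun hMsymm k) j
    simp only [Matrix.transpose_apply] at h1 h2
    simp only [Matrix.mul_apply]
    refine Finset.sum_congr rfl fun m _ => ?_
    have hm1 := congrFun (congrFun hMsymm m) k
    have hm2 := congrFun (congrFun hMsymm j) m
    simp only [Matrix.transpose_apply] at hm1 hm2
    rw [hm1, hm2]
    ring
  unfold biharmSq
  linarith
end

section
/- Let N ≥ 3 and let G be the cycle graph on vertex set {0,…,N−1}, in which vertex m is adjacent to vertices m±1 (mod N), with Laplacian matrix L. Let M be a pseudoinverse of L (M symmetric, M·𝟙 = 0, and L·M = I − (1/N)·J). Then for all vertices j, k with k ≤ j and l = j − k, the squared biharmonic distance satisfies d_B²(j,k) = l⁴/(12N) − l³/6 + l²N/12 − l²/(6N) + l/6. -/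
open Matrix Finset

/-- The periodic function `t ↦ (t mod N) (N - t mod N) / (2N)`. -/
noncomputable def psiR (N t : ℕ) : ℝ :=
  ((t % N : ℕ) : ℝ) * ((N - t % N : ℕ) : ℝ) / (2 * N)

lemma psiR_congr (N a b : ℕ) (h : a % N = b % N) : psiR N a = psiR N b := by
  unfold psiR; rw [h]

lemma psiR_eq (N t : ℕ) (ht : t < N) : psiR N t = (t : ℝ) * ((N : ℝ) - t) / (2 * N) := by
  unfold psiR; rw [Nat.mod_eq_of_lt ht, Nat.cast_sub ht.le]

lemma psiR_key (N : ℕ) (hN : 3 ≤ N) (t : ℕ) :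
    2 * psiR N t - psiR N (t + 1) - psiR N (t + (N - 1))
      = 1 / (N : ℝ) - (if t % N = 0 then 1 else 0) := by
  have hN0 : (N : ℝ) ≠ 0 := by positivity
  obtain ⟨r, hrN, hr⟩ : ∃ r, r < N ∧ t % N = r := ⟨t % N, Nat.mod_lt _ (by omega), rfl⟩
  have h0 : psiR N t = psiR N r := psiR_congr _ _ _ (by rw [← hr, Nat.mod_mod_of_dvd t dvd_rfl, hr])
  have h1 : psiR N (t + 1) = psiR N (r + 1) :=
    psiR_congr _ _ _ (by rw [← Nat.mod_add_mod, hr])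
  have h2 : psiR N (t + (N - 1)) = psiR N (r + (N - 1)) :=
    psiR_congr _ _ _ (by rw [← Nat.mod_add_mod, hr])
  rw [h0, h1, h2, hr]
  rcases eq_or_ne r 0 with h | hne
  · subst h
    rw [psiR_eq N 0 (by omega), psiR_eq N 1 (by omega),
        psiR_eq N (0 + (N - 1)) (by omega)]
    have : ((N - 1 : ℕ) : ℝ) = (N : ℝ) - 1 := by
      rw [Nat.cast_sub (by omega)]; norm_num
    simp only [Nat.zero_add, Nat.cast_zero, Nat.cast_one, this]
    rw [if_true]
    field_simp
    all_goals (try ring)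
    all_goals tauto
  · rcases eq_or_ne r (N - 1) with h | hne2
    · subst h
      have e1 : psiR N (N - 1 + 1) = 0 := by
        unfold psiR
        have : (N - 1 + 1) % N = 0 := by
          have : N - 1 + 1 = N := by omega
          rw [this, Nat.mod_self]
        rw [this]; simp
      have e2 : psiR N (N - 1 + (N - 1)) = psiR N (N - 2) := by
        apply psiR_congr
        have h1 : N - 1 + (N - 1) = (N - 2) + N := by omega
        rw [h1, Nat.add_mod_right]
      rw [e1, e2, psiR_eq N (N - 1) (by omega), psiR_eq N (N - 2) (by omega)]
      rw [if_neg (by omega)]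
      have c1 : ((N - 1 : ℕ) : ℝ) = (N : ℝ) - 1 := by rw [Nat.cast_sub (by omega)]; norm_num
      have c2 : ((N - 2 : ℕ) : ℝ) = (N : ℝ) - 2 := by rw [Nat.cast_sub (by omega)]; norm_num
      rw [c1, c2]
      field_simp
      all_goals (try ring)
      all_goals tauto
    · have hr1 : 1 ≤ r := by omega
      have hr2 : r + 1 < N := by omega
      have e2 : psiR N (r + (N - 1)) = psiR N (r - 1) := by
        apply psiR_congr
        have h1 : r + (N - 1) = (r - 1) + N := by omega
        rw [h1, Nat.add_mod_right]
      rw [e2, psiR_eq N r hrN, psiR_eq N (r + 1) hr2, psiR_eq N (r - 1) (by omega),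
          if_neg hne]
      have c1 : ((r - 1 : ℕ) : ℝ) = (r : ℝ) - 1 := by rw [Nat.cast_sub hr1]; norm_num
      rw [c1, sub_zero]
      push_cast
      field_simp
      all_goals (try ring)
      all_goals tauto

/-- Difference of two shifted copies of `psiR`. -/
noncomputable def Ffun (N l t : ℕ) : ℝ := psiR N t - psiR N (t + (N - l))

lemma Ffun_congr (N l a b : ℕ) (h : a % N = b % N) : Ffun N l a = Ffun N l b := by
  unfold Ffun
  rw [psiR_congr N a b h,
      psiR_congr N (a + (N - l)) (b + (N - l)) (by rw [Nat.add_mod a, h, ← Nat.add_mod])]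

lemma Ffun_key (N l : ℕ) (hN : 3 ≤ N) (t : ℕ) :
    2 * Ffun N l t - Ffun N l (t + 1) - Ffun N l (t + (N - 1))
      = (if (t + (N - l)) % N = 0 then 1 else 0) - (if t % N = 0 then 1 else 0) := by
  have h1 := psiR_key N hN t
  have h2 := psiR_key N hN (t + (N - l))
  have e1 : t + 1 + (N - l) = t + (N - l) + 1 := by omega
  have e2 : t + (N - 1) + (N - l) = t + (N - l) + (N - 1) := by omega
  unfold Ffun
  rw [e1, e2]
  linarith

lemma s1 (n : ℕ) : ∑ t ∈ Finset.range n, (t : ℝ) = n * (n - 1) / 2 := by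
  induction n with
  | zero => simp
  | succ m ih => rw [Finset.sum_range_succ, ih]; push_cast; ring

lemma s2 (n : ℕ) : ∑ t ∈ Finset.range n, (t : ℝ) ^ 2 = n * (n - 1) * (2 * n - 1) / 6 := by
  induction n with
  | zero => simp
  | succ m ih => rw [Finset.sum_range_succ, ih]; push_cast; ring

lemma sum_quad (n : ℕ) (a b : ℝ) :
    ∑ t ∈ Finset.range n, (a * t + b) ^ 2
      = a ^ 2 * (n * (n - 1) * (2 * n - 1) / 6) + 2 * a * b * (n * (n - 1) / 2) + n * b ^ 2 := by
  have h : ∀ t : ℕ, (a * t + b) ^ 2 = a ^ 2 * (t : ℝ) ^ 2 + 2 * a * b * t + b ^ 2 :=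
    fun t => by ring
  simp_rw [h]
  rw [Finset.sum_add_distrib, Finset.sum_add_distrib, ← Finset.mul_sum, ← Finset.mul_sum,
      s1, s2, Finset.sum_const]
  simp [nsmul_eq_mul]

lemma sum_sq_eval (N l : ℕ) (hN : 3 ≤ N) (hl : l < N) :
    ∑ t ∈ Finset.range N, (Ffun N l t) ^ 2
      = (l : ℝ) ^ 4 / (12 * N) - (l : ℝ) ^ 3 / 6 + (l : ℝ) ^ 2 * N / 12
          - (l : ℝ) ^ 2 / (6 * N) + (l : ℝ) / 6 := by
  have hN0 : (N : ℝ) ≠ 0 := by positivity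
  have hcl : ((N - l : ℕ) : ℝ) = (N : ℝ) - l := Nat.cast_sub hl.le
  have hval1 : ∀ t, t < l →
      Ffun N l t = (((N:ℝ) - l) / N) * t + (-(((N:ℝ) - l) * l) / (2 * N)) := by
    intro t ht
    unfold Ffun
    rw [psiR_eq N t (by omega), psiR_eq N (t + (N - l)) (by omega)]
    have : ((t + (N - l) : ℕ) : ℝ) = (t : ℝ) + ((N : ℝ) - l) := by
      push_cast [hcl]; ring
    rw [this]
    field_simp
    ring
  have hval2 : ∀ u, u < N - l →
      Ffun N l (l + u) = (-((l:ℝ) / N)) * u + ((l : ℝ) * ((N:ℝ) - l) / (2 * N)) := by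
    intro u hu
    unfold Ffun
    have e : psiR N (l + u + (N - l)) = psiR N u := by
      apply psiR_congr
      have h1 : l + u + (N - l) = u + N := by omega
      rw [h1, Nat.add_mod_right]
    rw [e, psiR_eq N (l + u) (by omega), psiR_eq N u (by omega)]
    push_cast
    field_simp
    ring
  rw [Finset.range_eq_Ico, ← Finset.sum_Ico_consecutive _ (Nat.zero_le l) hl.le,
      ← Finset.range_eq_Ico, Finset.sum_Ico_eq_sum_range]
  have h1 : ∑ t ∈ Finset.range l, (Ffun N l t) ^ 2
      = ∑ t ∈ Finset.range l, ((((N:ℝ) - l) / N) * t + (-(((N:ℝ) - l) * l) / (2 * N))) ^ 2 :=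
    Finset.sum_congr rfl (fun t ht => by rw [hval1 t (Finset.mem_range.mp ht)])
  have h2 : ∑ u ∈ Finset.range (N - l), (Ffun N l (l + u)) ^ 2
      = ∑ u ∈ Finset.range (N - l), ((-((l:ℝ) / N)) * u + ((l : ℝ) * ((N:ℝ) - l) / (2 * N))) ^ 2 :=
    Finset.sum_congr rfl (fun u hu => by rw [hval2 u (Finset.mem_range.mp hu)])
  rw [h1, h2, sum_quad, sum_quad, hcl]
  field_simp
  ring

theorem biharmonic_cycle (N : ℕ) (hN : 3 ≤ N)
    (G : SimpleGraph (Fin N)) [DecidableRel G.Adj]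
    (hG : ∀ a b : Fin N, G.Adj a b ↔
      ((a.val + 1) % N = b.val ∨ (b.val + 1) % N = a.val))
    (L M : Matrix (Fin N) (Fin N) ℝ)
    (hL : L = G.lapMatrix ℝ)
    (hMsymm : M.IsSymm)
    (hM1 : M.mulVec (fun _ => (1 : ℝ)) = 0)
    (hLM : L * M = 1 - (N : ℝ)⁻¹ • Matrix.of (fun _ _ => (1 : ℝ))) :
    ∀ (j k : Fin N) (l : ℕ), j.val = k.val + l →
      biharmSq M j k
        = (l : ℝ) ^ 4 / (12 * N) - (l : ℝ) ^ 3 / 6 + (l : ℝ) ^ 2 * N / 12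
            - (l : ℝ) ^ 2 / (6 * N) + (l : ℝ) / 6 := by
  intro j k l hjkl
  haveI : NeZero N := ⟨by omega⟩
  have hN0 : (N : ℝ) ≠ 0 := by positivity
  have hlN : l < N := by have := j.isLt; omega
  -- basic `Fin` arithmetic
  have hval1 : (1 : Fin N).val = 1 := by
    rw [Fin.val_one']; exact Nat.mod_eq_of_lt (by omega)
  have hadd : ∀ a : Fin N, (a + 1).val = (a.val + 1) % N := by
    intro a; rw [Fin.add_def, hval1]
  have hsub : ∀ a b : Fin N, (a - b).val = (N - b.val + a.val) % N := by
    intro a b; rw [Fin.sub_def]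
  -- the test vector
  set w : Fin N → ℝ := fun a => (if a = j then (1:ℝ) else 0) - (if a = k then 1 else 0)
    with hw
  have hwsum : ∑ a, w a = 0 := by
    rw [hw]
    rw [Finset.sum_sub_distrib]
    simp
  -- the explicit solution
  set y : Fin N → ℝ := fun i => Ffun N l (i - k).val with hy
  -- adjacency structure
  have hAdj : ∀ a b : Fin N, G.Adj a b ↔ (b = a + 1 ∨ a = b + 1) := by
    intro a b
    rw [hG]
    constructor
    · rintro (h | h)
      · left; exact (Fin.ext (by rw [hadd, h])).symm
      · right; exact (Fin.ext (by rw [hadd, h])).symm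
    · rintro (h | h)
      · left; rw [h, hadd]
      · right; rw [h, hadd]
  have hnbr : ∀ v : Fin N, G.neighborFinset v = {v + 1, v - 1} := by
    intro v
    ext u
    rw [SimpleGraph.mem_neighborFinset, hAdj]
    simp only [Finset.mem_insert, Finset.mem_singleton]
    constructor
    · rintro (h | h)
      · left; exact h
      · right; rw [h, add_sub_cancel_right]
    · rintro (h | h)
      · left; exact h
      · right; rw [h, sub_add_cancel]
  have hpq : ∀ v : Fin N, v + 1 ≠ v - 1 := by
    intro v h
    have h2 : v + (1 + 1) = v + 0 := by
      rw [← add_assoc, h, add_zero, sub_add_cancel]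
    have h3 : (1 + 1 : Fin N) = 0 := add_left_cancel h2
    have h4 : ((1 : Fin N) + 1).val = (0 : Fin N).val := congrArg Fin.val h3
    have h5 : ((1 : Fin N) + 1).val = 2 % N := by rw [Fin.add_def, hval1]
    have h6 : (0 : Fin N).val = 0 := rfl
    rw [h5, h6, Nat.mod_eq_of_lt (by omega)] at h4
    omega
  have hdeg : ∀ v : Fin N, G.degree v = 2 := by
    intro v
    rw [← SimpleGraph.card_neighborFinset_eq_degree, hnbr, Finset.card_pair (hpq v)]
  -- L applied to y
  have hLy : L.mulVec y = w := by
    funext i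
    rw [hL, SimpleGraph.lapMatrix_mulVec_apply, hnbr, Finset.sum_pair (hpq i), hdeg]
    have e1 : y (i + 1) = Ffun N l ((i - k).val + 1) := by
      rw [hy]
      show Ffun N l ((i + 1 - k)).val = _
      rw [add_sub_right_comm]
      apply Ffun_congr
      rw [hadd]
      exact Nat.mod_mod_of_dvd _ dvd_rfl
    have e2 : y (i - 1) = Ffun N l ((i - k).val + (N - 1)) := by
      rw [hy]
      show Ffun N l ((i - 1 - k)).val = _
      rw [sub_right_comm]
      apply Ffun_congr
      rw [hsub (i - k) 1, hval1]
      rw [Nat.mod_mod_of_dvd _ dvd_rfl, Nat.add_comm (N - 1)]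
    have hkey := Ffun_key N l hN ((i - k).val)
    have c2 : ((i - k).val % N = 0) ↔ i = k := by
      rw [Nat.mod_eq_of_lt (Fin.is_lt _)]
      constructor
      · intro h
        have : i - k = 0 := Fin.ext (by simpa using h)
        rwa [sub_eq_zero] at this
      · intro h; subst h; simp
    have c1 : (((i - k).val + (N - l)) % N = 0) ↔ i = j := by
      have harith : N - k.val + i.val + (N - l) = (N - j.val + i.val) + N := by
        have hk := k.isLt; have hj := j.isLt; omega
      have : ((i - k).val + (N - l)) % N = (i - j).val := by
        rw [hsub i k, Nat.mod_add_mod, harith, Nat.add_mod_right, ← hsub i j]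
      rw [this]
      constructor
      · intro h
        have : i - j = 0 := Fin.ext (by simpa using h)
        rwa [sub_eq_zero] at this
      · intro h; subst h; simp
    rw [hw]
    simp only [c1, c2] at hkey
    have hyi : y i = Ffun N l ((i - k).val) := rfl
    rw [e1, e2, hyi]
    push_cast
    linarith
  -- L applied to M w
  have hLu : L.mulVec (M.mulVec w) = w := by
    rw [Matrix.mulVec_mulVec, hLM, Matrix.sub_mulVec, Matrix.one_mulVec]
    have : ((N:ℝ)⁻¹ • Matrix.of (fun (_ _ : Fin N) => (1:ℝ))).mulVec w = 0 := by
      rw [Matrix.smul_mulVec]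
      have : (Matrix.of (fun (_ _ : Fin N) => (1:ℝ))).mulVec w = 0 := by
        funext i
        simp only [Matrix.mulVec, dotProduct, Matrix.of_apply, one_mul]
        exact hwsum
      rw [this, smul_zero]
    rw [this, sub_zero]
  -- column sums of M vanish
  have hMrow : ∀ a : Fin N, ∑ i, M a i = 0 := by
    intro a
    have := congrFun hM1 a
    simpa [Matrix.mulVec, dotProduct] using this
  have hMcol : ∀ a : Fin N, ∑ i, M i a = 0 := by
    intro a
    rw [← hMrow a]
    exact Finset.sum_congr rfl fun i _ => (hMsymm.apply a i)
  have husum : ∑ i, (M.mulVec w) i = 0 := by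
    simp only [Matrix.mulVec, dotProduct]
    rw [Finset.sum_comm]
    exact Finset.sum_eq_zero fun a _ => by rw [← Finset.sum_mul, hMcol, zero_mul]
  -- sum of y vanishes
  have hpsum : ∀ c : ℕ, ∑ t : Fin N, psiR N (t.val + c) = ∑ t : Fin N, psiR N t.val := by
    intro c
    have cF : Fin N := ⟨c % N, Nat.mod_lt _ (by omega)⟩
    calc ∑ t : Fin N, psiR N (t.val + c)
        = ∑ t : Fin N, psiR N ((t + ⟨c % N, Nat.mod_lt _ (by omega)⟩ : Fin N).val) := by
          apply Finset.sum_congr rfl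
          intro t _
          apply psiR_congr
          rw [Fin.add_def]
          rw [Nat.mod_mod_of_dvd _ dvd_rfl, Nat.add_mod_mod]
      _ = ∑ t : Fin N, psiR N t.val := by
          apply Fintype.sum_equiv (Equiv.addRight (⟨c % N, Nat.mod_lt _ (by omega)⟩ : Fin N))
          intro t
          rfl
  have hysum : ∑ i, y i = 0 := by
    have b1 : ∑ i : Fin N, y i = ∑ t : Fin N, Ffun N l t.val :=
      Fintype.sum_equiv (Equiv.subRight k) _ _ (fun i => rfl)
    rw [b1]
    unfold Ffun
    rw [Finset.sum_sub_distrib, hpsum (N - l), sub_self]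
  -- kernel argument: M w = y
  have hker : ∀ z : Fin N → ℝ, L.mulVec z = 0 → (∑ i, z i) = 0 → z = 0 := by
    intro z hz0 hzs
    have hadjz : ∀ a b, G.Adj a b → z a = z b := by
      rw [← SimpleGraph.lapMatrix_mulVec_eq_zero_iff_forall_adj]
      rw [← hL, hz0]
    have hconst : ∀ m, (hm : m < N) → z ⟨m, hm⟩ = z ⟨0, by omega⟩ := by
      intro m
      induction m with
      | zero => intro hm; rfl
      | succ p ih =>
        intro hm
        have hp : p < N := by omega
        have hadj : G.Adj ⟨p, hp⟩ ⟨p + 1, hm⟩ := by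
          rw [hG]; left; simp [Nat.mod_eq_of_lt hm]
        rw [← hadjz _ _ hadj]
        exact ih hp
    have hzall : ∀ a : Fin N, z a = z ⟨0, by omega⟩ := by
      intro a; obtain ⟨m, hm⟩ := a; exact hconst m hm
    have hsum : ∑ i : Fin N, z i = (N : ℝ) * z ⟨0, by omega⟩ := by
      rw [Finset.sum_congr rfl fun i _ => hzall i, Finset.sum_const, Finset.card_univ,
          Fintype.card_fin, nsmul_eq_mul]
    rw [hsum] at hzs
    have hz0' : z ⟨0, by omega⟩ = 0 := by
      rcases mul_eq_zero.mp hzs with h | h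
      · exact absurd h hN0
      · exact h
    funext a
    rw [hzall a, hz0']
    rfl
  have huy : M.mulVec w = y := by
    have h0 : L.mulVec (M.mulVec w - y) = 0 := by
      rw [Matrix.mulVec_sub, hLu, hLy, sub_self]
    have hs : ∑ i, (M.mulVec w - y) i = 0 := by
      simp only [Pi.sub_apply]
      rw [Finset.sum_sub_distrib, husum, hysum, sub_self]
    have := hker _ h0 hs
    funext i
    have h := congrFun this i
    simp only [Pi.sub_apply, Pi.zero_apply] at h
    linarith
  -- biharmonic distance as a sum of squares
  have hbi : biharmSq M j k = ∑ a, ((M.mulVec w) a) ^ 2 := by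
    unfold biharmSq
    simp only [Matrix.mul_apply]
    rw [← Finset.sum_add_distrib, Finset.mul_sum, ← Finset.sum_sub_distrib]
    apply Finset.sum_congr rfl
    intro a _
    have h1 : M a j = M j a := hMsymm.apply j a
    have h2 : M a k = M k a := hMsymm.apply k a
    have h3 : (M.mulVec w) a = M a j - M a k := by
      rw [hw]
      simp only [Matrix.mulVec, dotProduct, mul_sub, mul_ite, mul_one, mul_zero,
        Finset.sum_sub_distrib, Finset.sum_ite_eq', Finset.mem_univ, if_true]
    rw [← h1, ← h2, h3]
    ring
  rw [hbi, huy, hy]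
  have b1 : ∑ a : Fin N, (Ffun N l (a - k).val) ^ 2 = ∑ t : Fin N, (Ffun N l t.val) ^ 2 :=
    Fintype.sum_equiv (Equiv.subRight k) _ _ (fun i => rfl)
  rw [b1]
  rw [Fin.sum_univ_eq_sum_range (fun t => (Ffun N l t) ^ 2) N]
  exact sum_sq_eval N l hN hlN
end

section
/- Let N ≥ 2 and let G be the path graph on vertex set {0,…,N−1}, in which vertex m is adjacent to vertex m+1 for 0 ≤ m ≤ N−2 and there are no other edges, with Laplacian matrix L. Let M be a pseudoinverse of L (M symmetric, M·𝟙 = 0, and L·M = I − (1/N)·J). Then for all vertices j, k with k < j, the squared biharmonic distance satisfies d_B²(j,k) = j/6 + j²/2 − j²/(4N) + j³/3 − j³/(2N) − j⁴/(4N) − k/6 − jk + jk/(2N) + j²k/(2N) + k²/2 − k²/(4N) − jk² + jk²/(2N) + j²k²/(2N) + 2k³/3 − k³/(2N) − k⁴/(4N). -/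
open Matrix Finset

private lemma gauss1 (n : ℕ) : ∑ i ∈ Finset.range n, (i : ℝ) = ((n : ℝ) ^ 2 - n) / 2 := by
  induction n with
  | zero => simp
  | succ n ih => rw [Finset.sum_range_succ, ih]; push_cast; ring

private lemma gauss2 (n : ℕ) :
    ∑ i ∈ Finset.range n, (i : ℝ) ^ 2 = (2 * (n : ℝ) ^ 3 - 3 * (n : ℝ) ^ 2 + n) / 6 := by
  induction n with
  | zero => simp
  | succ n ih => rw [Finset.sum_range_succ, ih]; push_cast; ring

theorem biharmonic_path (N : ℕ) (hN : 2 ≤ N)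
    (G : SimpleGraph (Fin N)) [DecidableRel G.Adj]
    (hG : ∀ a b : Fin N, G.Adj a b ↔ (a.val + 1 = b.val ∨ b.val + 1 = a.val))
    (L M : Matrix (Fin N) (Fin N) ℝ)
    (hL : L = G.lapMatrix ℝ)
    (hMsymm : M.IsSymm)
    (hM1 : M.mulVec (fun _ => (1 : ℝ)) = 0)
    (hLM : L * M = 1 - (N : ℝ)⁻¹ • Matrix.of (fun _ _ => (1 : ℝ))) :
    ∀ j k : Fin N, k < j →
      biharmSq M j k
        = (j.val : ℝ) / 6 + (j.val : ℝ) ^ 2 / 2 - (j.val : ℝ) ^ 2 / (4 * N)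
            + (j.val : ℝ) ^ 3 / 3 - (j.val : ℝ) ^ 3 / (2 * N) - (j.val : ℝ) ^ 4 / (4 * N)
            - (k.val : ℝ) / 6 - (j.val : ℝ) * k.val + (j.val : ℝ) * k.val / (2 * N)
            + (j.val : ℝ) ^ 2 * k.val / (2 * N) + (k.val : ℝ) ^ 2 / 2
            - (k.val : ℝ) ^ 2 / (4 * N) - (j.val : ℝ) * (k.val : ℝ) ^ 2
            + (j.val : ℝ) * (k.val : ℝ) ^ 2 / (2 * N)
            + (j.val : ℝ) ^ 2 * (k.val : ℝ) ^ 2 / (2 * N) + 2 * (k.val : ℝ) ^ 3 / 3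
            - (k.val : ℝ) ^ 3 / (2 * N) - (k.val : ℝ) ^ 4 / (4 * N) := by
  intro j k hkj
  have hN0 : (N : ℝ) ≠ 0 := by positivity
  have hNpos : 0 < N := by omega
  have hkjv : k.val < j.val := hkj
  have hjN : j.val < N := j.isLt
  -- the entrywise formula for the path Laplacian
  have hLx : ∀ (x : Fin N → ℝ) (a : Fin N),
      (G.lapMatrix ℝ *ᵥ x) a =
        (if h : a.val + 1 < N then x a - x ⟨a.val + 1, h⟩ else 0)
          + (if _ : 0 < a.val then
              x a - x ⟨a.val - 1, lt_of_le_of_lt (Nat.sub_le a.val 1) a.isLt⟩ else 0) := by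
    intro x a
    rw [SimpleGraph.lapMatrix_mulVec_apply]
    have hdeg : (G.degree a : ℝ) * x a - ∑ u ∈ G.neighborFinset a, x u
        = ∑ u ∈ G.neighborFinset a, (x a - x u) := by
      rw [Finset.sum_sub_distrib, Finset.sum_const, SimpleGraph.degree, nsmul_eq_mul]
    rw [hdeg]
    by_cases h1 : a.val + 1 < N
    · by_cases h2 : 0 < a.val
      · have hset : G.neighborFinset a =
            {⟨a.val + 1, h1⟩, ⟨a.val - 1, lt_of_le_of_lt (Nat.sub_le a.val 1) a.isLt⟩} := by
          ext u
          simp only [SimpleGraph.mem_neighborFinset, hG, Finset.mem_insert,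
            Finset.mem_singleton, Fin.ext_iff]
          omega
        rw [hset, Finset.sum_pair (by simp only [ne_eq, Fin.ext_iff]; omega)]
        rw [dif_pos h1, dif_pos h2]
      · have hset : G.neighborFinset a = {⟨a.val + 1, h1⟩} := by
          ext u
          simp only [SimpleGraph.mem_neighborFinset, hG, Finset.mem_singleton, Fin.ext_iff]
          omega
        rw [hset, Finset.sum_singleton, dif_pos h1, dif_neg h2, add_zero]
    · by_cases h2 : 0 < a.val
      · have hset : G.neighborFinset a =
            {⟨a.val - 1, lt_of_le_of_lt (Nat.sub_le a.val 1) a.isLt⟩} := by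
          ext u
          simp only [SimpleGraph.mem_neighborFinset, hG, Finset.mem_singleton, Fin.ext_iff]
          omega
        rw [hset, Finset.sum_singleton, dif_neg h1, dif_pos h2, zero_add]
      · exfalso; have := a.isLt; omega
  -- the explicit solution vector
  set dn : ℕ := j.val - k.val with hdn
  set f : ℕ → ℕ := fun i => min (i - k.val) dn with hf
  set S : ℝ := ∑ i ∈ Finset.range N, (f i : ℝ) with hSdef
  set v : Fin N → ℝ := fun i => (f i.val : ℝ) - S / N with hv
  set w : Fin N → ℝ := fun a => (if a = j then (1 : ℝ) else 0) - (if a = k then (1 : ℝ) else 0)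
    with hw
  -- sum of v is zero
  have hvsum : ∑ i : Fin N, v i = 0 := by
    have : ∑ i : Fin N, v i = ∑ i ∈ Finset.range N, ((f i : ℝ) - S / N) :=
      Fin.sum_univ_eq_sum_range (fun i => (f i : ℝ) - S / N) N
    rw [this, Finset.sum_sub_distrib, Finset.sum_const, Finset.card_range, ← hSdef,
      nsmul_eq_mul]
    field_simp
    ring
  -- sum of w is zero
  have hwsum : ∑ b : Fin N, w b = 0 := by
    have hjk : j ≠ k := by intro h; rw [h] at hkj; exact lt_irrefl _ hkj
    simp [hw, Finset.sum_sub_distrib, Finset.sum_ite_eq']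
  -- L * v = w
  have hLv : G.lapMatrix ℝ *ᵥ v = w := by
    funext a
    rw [hLx v a]
    have haN : a.val < N := a.isLt
    simp only [hv, hw]
    rcases lt_or_ge a.val k.val with hc | hc
    · -- a < k : all values 0
      have haj : a ≠ j := by intro h; rw [h] at hc; omega
      have hak : a ≠ k := by intro h; rw [h] at hc; omega
      rw [if_neg haj, if_neg hak]
      have e0 : f a.val = 0 := by simp only [hf]; omega
      have e1 : f (a.val + 1) = 0 := by simp only [hf]; omega
      have e2 : f (a.val - 1) = 0 := by simp only [hf]; omega
      split_ifs <;> simp [e0, e1, e2]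
    · rcases eq_or_lt_of_le hc with hc1 | hc1
      · -- a = k
        have hak : a = k := by apply Fin.ext; omega
        have haj : a ≠ j := by intro h; rw [h] at hc1; omega
        rw [if_neg haj, if_pos hak]
        have h1 : a.val + 1 < N := by omega
        have e0 : f a.val = 0 := by simp only [hf]; omega
        have e1 : f (a.val + 1) = 1 := by simp only [hf]; omega
        have e2 : f (a.val - 1) = 0 := by simp only [hf]; omega
        rw [dif_pos h1]
        split_ifs <;> simp [e0, e1, e2] <;> ring
      · rcases lt_or_ge a.val j.val with hc2 | hc2
        · -- k < a < j
          have haj : a ≠ j := by intro h; rw [h] at hc2; omega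
          have hak : a ≠ k := by intro h; rw [h] at hc1; omega
          rw [if_neg haj, if_neg hak]
          have h1 : a.val + 1 < N := by omega
          have h2 : 0 < a.val := by omega
          have e1 : f (a.val + 1) = f a.val + 1 := by simp only [hf]; omega
          have e2 : f a.val = f (a.val - 1) + 1 := by simp only [hf]; omega
          rw [dif_pos h1, dif_pos h2, e1, e2]
          push_cast; ring
        · rcases eq_or_lt_of_le hc2 with hc3 | hc3
          · -- a = j
            have haj : a = j := by apply Fin.ext; omega
            have hak : a ≠ k := by intro h; rw [h] at hc1; omega
            rw [if_pos haj, if_neg hak]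
            have h2 : 0 < a.val := by omega
            have e2 : f a.val = f (a.val - 1) + 1 := by simp only [hf]; omega
            have e1 : f (a.val + 1) = f a.val := by simp only [hf]; omega
            rw [dif_pos h2, e2]
            by_cases h1 : a.val + 1 < N
            · rw [dif_pos h1, e1, e2]; push_cast; ring
            · rw [dif_neg h1]; push_cast; ring
          · -- j < a
            have haj : a ≠ j := by intro h; rw [h] at hc3; omega
            have hak : a ≠ k := by intro h; rw [h] at hc1; omega
            rw [if_neg haj, if_neg hak]
            have e0 : f a.val = dn := by simp only [hf]; omega
            have e1 : f (a.val + 1) = dn := by simp only [hf]; omega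
            have e2 : f (a.val - 1) = dn := by simp only [hf]; omega
            split_ifs <;> simp [e0, e1, e2]
  -- M * w = v
  have hMw : M *ᵥ w = v := by
    have hLMw : L *ᵥ (M *ᵥ w) = w := by
      rw [Matrix.mulVec_mulVec, hLM, Matrix.sub_mulVec, Matrix.one_mulVec,
        Matrix.smul_mulVec]
      have : (Matrix.of (fun _ _ => (1 : ℝ)) : Matrix (Fin N) (Fin N) ℝ) *ᵥ w = 0 := by
        funext b
        simp only [Matrix.mulVec, dotProduct, Matrix.of_apply, one_mul]
        exact hwsum
      rw [this, smul_zero, sub_zero]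
    have hker : L *ᵥ (fun a => (M *ᵥ w) a - v a) = 0 := by
      have : (fun a => (M *ᵥ w) a - v a) = (M *ᵥ w) - v := rfl
      rw [this, Matrix.mulVec_sub, hLMw, hL, hLv, sub_self]
    -- kernel: adjacent entries are equal
    have hadj : ∀ a b : Fin N, G.Adj a b →
        ((M *ᵥ w) a - v a) = ((M *ᵥ w) b - v b) := by
      have := (SimpleGraph.lapMatrix_mulVec_eq_zero_iff_forall_adj G
        (x := fun a => (M *ᵥ w) a - v a)).mp
      rw [hL] at hker
      exact this hker
    -- hence constant
    have hconst : ∀ a : Fin N, ((M *ᵥ w) a - v a) = ((M *ᵥ w) ⟨0, hNpos⟩ - v ⟨0, hNpos⟩) := by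
      have key : ∀ n (hn : n < N),
          ((M *ᵥ w) ⟨n, hn⟩ - v ⟨n, hn⟩) = ((M *ᵥ w) ⟨0, hNpos⟩ - v ⟨0, hNpos⟩) := by
        intro n
        induction n with
        | zero => intro _; rfl
        | succ m ih =>
          intro hn
          have hm : m < N := by omega
          have hAdj : G.Adj ⟨m, hm⟩ ⟨m + 1, hn⟩ := by rw [hG]; left; rfl
          rw [← hadj _ _ hAdj]
          exact ih hm
      intro a
      have : a = ⟨a.val, a.isLt⟩ := rfl
      rw [this]; exact key a.val a.isLt
    -- sum of (M *ᵥ w) is zero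
    have hMwsum : ∑ a : Fin N, (M *ᵥ w) a = 0 := by
      have hcol : ∀ b : Fin N, ∑ a : Fin N, M a b = 0 := by
        intro b
        have h1 := congrFun hM1 b
        simp only [Matrix.mulVec, dotProduct, mul_one, Pi.zero_apply] at h1
        calc ∑ a : Fin N, M a b = ∑ a : Fin N, M b a :=
              Finset.sum_congr rfl (fun a _ => hMsymm.apply b a)
          _ = 0 := h1
      simp only [Matrix.mulVec, dotProduct]
      rw [Finset.sum_comm]
      have : ∀ b : Fin N, ∑ a : Fin N, M a b * w b = 0 := by
        intro b
        rw [← Finset.sum_mul, hcol, zero_mul]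
      simp only [this, Finset.sum_const_zero]
    -- conclude
    have hsum0 : ∑ a : Fin N, ((M *ᵥ w) a - v a) = 0 := by
      rw [Finset.sum_sub_distrib, hMwsum, hvsum, sub_zero]
    have hzero : (M *ᵥ w) ⟨0, hNpos⟩ - v ⟨0, hNpos⟩ = 0 := by
      have : ∑ a : Fin N, ((M *ᵥ w) a - v a)
          = N * ((M *ᵥ w) ⟨0, hNpos⟩ - v ⟨0, hNpos⟩) := by
        rw [Finset.sum_congr rfl (fun a _ => hconst a), Finset.sum_const, Finset.card_univ,
          Fintype.card_fin, nsmul_eq_mul]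
      rw [this] at hsum0
      exact (mul_eq_zero.mp hsum0).resolve_left hN0
    funext a
    have := hconst a
    rw [hzero] at this
    linarith [this]
  -- v c = M c j - M c k
  have hvc : ∀ c : Fin N, v c = M c j - M c k := by
    intro c
    have := congrFun hMw c
    rw [← this]
    have hjk : j ≠ k := by intro h; rw [h] at hkj; exact lt_irrefl _ hkj
    simp only [Matrix.mulVec, dotProduct, hw, mul_sub, mul_ite, mul_one, mul_zero]
    rw [Finset.sum_sub_distrib]
    simp [Finset.sum_ite_eq']
  -- biharmSq = ∑ v²
  have hbi : biharmSq M j k = ∑ c : Fin N, (v c) ^ 2 := by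
    simp only [biharmSq, Matrix.mul_apply]
    rw [Finset.mul_sum, ← Finset.sum_add_distrib, ← Finset.sum_sub_distrib]
    apply Finset.sum_congr rfl
    intro c _
    rw [hvc c, hMsymm.apply j c, hMsymm.apply k c]
    ring
  -- ∑ v² = Q - S²/N
  have hQsplit : ∑ c : Fin N, (v c) ^ 2
      = (∑ i ∈ Finset.range N, (f i : ℝ) ^ 2) - S ^ 2 / N := by
    have h1 : ∑ c : Fin N, (v c) ^ 2 = ∑ i ∈ Finset.range N, ((f i : ℝ) - S / N) ^ 2 :=
      Fin.sum_univ_eq_sum_range (fun i => ((f i : ℝ) - S / N) ^ 2) N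
    rw [h1]
    have h2 : ∀ i ∈ Finset.range N, ((f i : ℝ) - S / N) ^ 2
        = (f i : ℝ) ^ 2 - 2 * (S / N) * (f i : ℝ) + (S / N) ^ 2 := by
      intro i _; ring
    rw [Finset.sum_congr rfl h2, Finset.sum_add_distrib, Finset.sum_sub_distrib,
      ← Finset.mul_sum, ← hSdef, Finset.sum_const, Finset.card_range, nsmul_eq_mul]
    field_simp
    ring
  -- closed forms for S and Q
  have hsplit3 : ∀ g : ℕ → ℝ, ∑ i ∈ Finset.range N, g i
      = (∑ i ∈ Finset.Ico 0 k.val, g i) + (∑ i ∈ Finset.Ico k.val j.val, g i)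
        + (∑ i ∈ Finset.Ico j.val N, g i) := by
    intro g
    rw [Finset.range_eq_Ico,
      ← Finset.sum_Ico_consecutive g (Nat.zero_le j.val) (le_of_lt hjN),
      ← Finset.sum_Ico_consecutive g (Nat.zero_le k.val) (le_of_lt hkjv)]
  have hcard : (Finset.Ico j.val N).card = N - j.val := Nat.card_Ico _ _
  have hS : S = ((dn : ℝ) ^ 2 - dn) / 2 + ((N - j.val : ℕ) : ℝ) * dn := by
    rw [hSdef, hsplit3 (fun i => (f i : ℝ))]
    have p1 : ∑ i ∈ Finset.Ico 0 k.val, (f i : ℝ) = 0 := by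
      apply Finset.sum_eq_zero
      intro i hi
      rw [Finset.mem_Ico] at hi
      have : f i = 0 := by simp only [hf]; omega
      rw [this]; norm_num
    have p2 : ∑ i ∈ Finset.Ico k.val j.val, (f i : ℝ) = ((dn : ℝ) ^ 2 - dn) / 2 := by
      rw [Finset.sum_Ico_eq_sum_range]
      have : ∀ i ∈ Finset.range (j.val - k.val), (f (k.val + i) : ℝ) = (i : ℝ) := by
        intro i hi
        rw [Finset.mem_range] at hi
        have : f (k.val + i) = i := by simp only [hf]; omega
        rw [this]
      rw [Finset.sum_congr rfl this, ← hdn, gauss1]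
    have p3 : ∑ i ∈ Finset.Ico j.val N, (f i : ℝ) = ((N - j.val : ℕ) : ℝ) * dn := by
      have : ∀ i ∈ Finset.Ico j.val N, (f i : ℝ) = (dn : ℝ) := by
        intro i hi
        rw [Finset.mem_Ico] at hi
        have : f i = dn := by simp only [hf]; omega
        rw [this]
      rw [Finset.sum_congr rfl this, Finset.sum_const, hcard, nsmul_eq_mul]
    rw [p1, p2, p3, zero_add]
  have hQ : ∑ i ∈ Finset.range N, (f i : ℝ) ^ 2
      = (2 * (dn : ℝ) ^ 3 - 3 * (dn : ℝ) ^ 2 + dn) / 6 + ((N - j.val : ℕ) : ℝ) * (dn : ℝ) ^ 2 := by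
    rw [hsplit3 (fun i => (f i : ℝ) ^ 2)]
    have p1 : ∑ i ∈ Finset.Ico 0 k.val, (f i : ℝ) ^ 2 = 0 := by
      apply Finset.sum_eq_zero
      intro i hi
      rw [Finset.mem_Ico] at hi
      have : f i = 0 := by simp only [hf]; omega
      rw [this]; norm_num
    have p2 : ∑ i ∈ Finset.Ico k.val j.val, (f i : ℝ) ^ 2
        = (2 * (dn : ℝ) ^ 3 - 3 * (dn : ℝ) ^ 2 + dn) / 6 := by
      rw [Finset.sum_Ico_eq_sum_range]
      have : ∀ i ∈ Finset.range (j.val - k.val), (f (k.val + i) : ℝ) ^ 2 = (i : ℝ) ^ 2 := by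
        intro i hi
        rw [Finset.mem_range] at hi
        have : f (k.val + i) = i := by simp only [hf]; omega
        rw [this]
      rw [Finset.sum_congr rfl this, ← hdn, gauss2]
    have p3 : ∑ i ∈ Finset.Ico j.val N, (f i : ℝ) ^ 2 = ((N - j.val : ℕ) : ℝ) * (dn : ℝ) ^ 2 := by
      have : ∀ i ∈ Finset.Ico j.val N, (f i : ℝ) ^ 2 = (dn : ℝ) ^ 2 := by
        intro i hi
        rw [Finset.mem_Ico] at hi
        have : f i = dn := by simp only [hf]; omega
        rw [this]
      rw [Finset.sum_congr rfl this, Finset.sum_const, hcard, nsmul_eq_mul]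
    rw [p1, p2, p3, zero_add]
  -- finish
  rw [hbi, hQsplit, hQ, hS]
  have hdcast : (dn : ℝ) = (j.val : ℝ) - (k.val : ℝ) := by
    rw [hdn]; push_cast [Nat.cast_sub (le_of_lt hkjv)]; ring
  have hNjcast : ((N - j.val : ℕ) : ℝ) = (N : ℝ) - (j.val : ℝ) := by
    push_cast [Nat.cast_sub (le_of_lt hjN)]; ring
  rw [hdcast, hNjcast]
  field_simp
  ring
end

section
/- For all integers N ≥ 2 and all integers l with 0 ≤ l ≤ N, one has (1/N) · Σ_{n=1}^{N−1} (1 − cos(2lnπ/N)) / (1 − cos(2nπ/N))² = l⁴/(6N) − l³/3 + l²N/6 − l²/(3N) + l/3. -/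
open Finset Real


lemma sumIccId (k : ℕ) : ∑ m ∈ Finset.Icc 1 k, (m:ℝ) = k*(k+1)/2 := by
  induction k with
  | zero => simp
  | succ j ih =>
    rw [Finset.sum_Icc_succ_top (by omega), ih]
    push_cast; ring

lemma sumIccSq (k : ℕ) : ∑ m ∈ Finset.Icc 1 k, (m:ℝ)^2 = k*(k+1)*(2*k+1)/6 := by
  induction k with
  | zero => simp
  | succ j ih =>
    rw [Finset.sum_Icc_succ_top (by omega), ih]
    push_cast; ring

lemma sumIccCube (k : ℕ) : ∑ m ∈ Finset.Icc 1 k, (m:ℝ)^3 = (k*(k+1)/2)^2 := by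
  induction k with
  | zero => simp
  | succ j ih =>
    rw [Finset.sum_Icc_succ_top (by omega), ih]
    push_cast; ring

lemma sum_poly3 (k : ℕ) (a b c d : ℝ) :
    ∑ m ∈ Finset.Icc 1 k, (a + b*(m:ℝ) + c*(m:ℝ)^2 + d*(m:ℝ)^3)
      = a*k + b*((k:ℝ)*(k+1)/2) + c*((k:ℝ)*(k+1)*(2*k+1)/6) + d*(((k:ℝ)*(k+1)/2)^2) := by
  rw [Finset.sum_add_distrib, Finset.sum_add_distrib, Finset.sum_add_distrib,
    Finset.sum_const, ← Finset.mul_sum, ← Finset.mul_sum, ← Finset.mul_sum,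
    sumIccId, sumIccSq, sumIccCube, Nat.card_Icc]
  simp; ring


lemma dirichlet (θ : ℝ) (l : ℕ) :
    (1 - Real.cos θ) * (1 + ∑ m ∈ Finset.Icc 1 l, 2 * Real.cos (m*θ))
      = Real.cos (l*θ) - Real.cos ((l+1)*θ) := by
  induction l with
  | zero => simp
  | succ j ih =>
    rw [Finset.sum_Icc_succ_top (by omega)]
    push_cast
    push_cast at ih
    rw [show ((j:ℝ)+1+1)*θ = ((j:ℝ)*θ+θ)+θ by ring, show ((j:ℝ)+1)*θ = (j:ℝ)*θ+θ by ring,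
      Real.cos_add, Real.cos_add, Real.sin_add]
    simp only [Real.cos_add, Real.sin_add]
    rw [show ((j:ℝ)+1)*θ = (j:ℝ)*θ+θ by ring, Real.cos_add] at ih
    linear_combination ih - Real.cos ((j:ℝ)*θ) * (Real.sin_sq_add_cos_sq θ)

noncomputable def Kk (θ : ℝ) (l : ℕ) : ℝ :=
  l + ∑ m ∈ Finset.Icc 1 (l-1), 2*((l:ℝ)-(m:ℝ))*Real.cos ((m:ℝ)*θ)

lemma key (θ : ℝ) (l : ℕ) : 1 - Real.cos (l*θ) = (1 - Real.cos θ) * Kk θ l := by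
  induction l with
  | zero => simp [Kk]
  | succ j ih =>
    have step : Kk θ (j+1) = Kk θ j + (1 + ∑ m ∈ Finset.Icc 1 j, 2 * Real.cos (m*θ)) := by
      unfold Kk
      simp only [Nat.add_sub_cancel]
      have split : ∑ m ∈ Finset.Icc 1 j, 2*(((j:ℝ)+1)-(m:ℝ))*Real.cos ((m:ℝ)*θ)
          = ∑ m ∈ Finset.Icc 1 j, 2*((j:ℝ)-(m:ℝ))*Real.cos ((m:ℝ)*θ)
            + ∑ m ∈ Finset.Icc 1 j, 2 * Real.cos ((m:ℝ)*θ) := by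
        rw [← Finset.sum_add_distrib]
        apply Finset.sum_congr rfl
        intro m _; ring
      have topzero : ∑ m ∈ Finset.Icc 1 j, 2*((j:ℝ)-(m:ℝ))*Real.cos ((m:ℝ)*θ)
          = ∑ m ∈ Finset.Icc 1 (j-1), 2*((j:ℝ)-(m:ℝ))*Real.cos ((m:ℝ)*θ) := by
        cases j with
        | zero => simp
        | succ i =>
          rw [Finset.sum_Icc_succ_top (by omega)]
          simp only [Nat.add_sub_cancel]
          push_cast
          ring
      push_cast
      rw [split, topzero]
      ring
    rw [step, mul_add, ← ih, dirichlet θ j]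
    push_cast
    ring

lemma sum_coeff (l : ℕ) :
    ∑ m ∈ Finset.Icc 1 (l-1), 2*((l:ℝ)-(m:ℝ)) = (l:ℝ)^2 - l := by
  cases l with
  | zero => simp
  | succ k =>
    simp only [Nat.add_sub_cancel]
    have : ∑ m ∈ Finset.Icc 1 k, 2*(((k:ℝ)+1)-(m:ℝ))
        = ∑ m ∈ Finset.Icc 1 k, (2*((k:ℝ)+1) - 2*(m:ℝ)) := by
      apply Finset.sum_congr rfl; intro m _; ring
    push_cast
    rw [this, Finset.sum_sub_distrib, Finset.sum_const, ← Finset.mul_sum, sumIccId, Nat.card_Icc]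
    simp
    ring

lemma K_eq (θ : ℝ) (l : ℕ) :
    Kk θ l = (l:ℝ)^2 - ∑ m ∈ Finset.Icc 1 (l-1), 2*((l:ℝ)-(m:ℝ))*(1 - Real.cos ((m:ℝ)*θ)) := by
  have : ∑ m ∈ Finset.Icc 1 (l-1), 2*((l:ℝ)-(m:ℝ))*(1 - Real.cos ((m:ℝ)*θ))
      = ∑ m ∈ Finset.Icc 1 (l-1), (2*((l:ℝ)-(m:ℝ)) - 2*((l:ℝ)-(m:ℝ))*Real.cos ((m:ℝ)*θ)) := by
    apply Finset.sum_congr rfl; intro m _; ring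
  rw [this, Finset.sum_sub_distrib, sum_coeff, Kk]
  ring

lemma K_eq' (θ : ℝ) (l : ℕ) :
    Kk θ l = (l:ℝ)^2 - (1 - Real.cos θ) * ∑ m ∈ Finset.Icc 1 (l-1), 2*((l:ℝ)-(m:ℝ))*Kk θ m := by
  rw [K_eq, Finset.mul_sum]
  congr 1
  apply Finset.sum_congr rfl
  intro m _
  rw [key θ m]
  ring

lemma L4 (θ : ℝ) (hc : Real.cos θ ≠ 1) (l : ℕ) :
    (1 - Real.cos ((l:ℝ)*θ)) / (1 - Real.cos θ)^2
      = (l:ℝ)^2/(1 - Real.cos θ) - ∑ m ∈ Finset.Icc 1 (l-1), 2*((l:ℝ)-(m:ℝ))*Kk θ m := by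
  have h : 1 - Real.cos θ ≠ 0 := by
    intro h; apply hc; linarith [sub_eq_zero.mp h]
  rw [key θ l, K_eq' θ l]
  field_simp


lemma cosC (N p : ℕ) (hN : 2 ≤ N) (h1 : 1 ≤ p) (h2 : p < N) :
    ∑ n ∈ Finset.Icc 1 (N-1), Real.cos ((p:ℝ)*(2*n*Real.pi/N)) = -1 := by
  have hN0 : (N:ℝ) ≠ 0 := by positivity
  set z : ℂ := Complex.exp ((2*Real.pi*p/N : ℝ) * Complex.I) with hz
  have hz1 : z ≠ 1 := by
    rw [hz]
    intro h
    rw [Complex.exp_eq_one_iff] at h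
    obtain ⟨k, hk⟩ := h
    have : ((2*Real.pi*p/N : ℝ) : ℂ) * Complex.I = (k : ℂ) * (2 * Real.pi * Complex.I) := hk
    have hre : (2*Real.pi*p/N : ℝ) = (k : ℝ) * (2 * Real.pi) := by
      have := congrArg Complex.im (by rw [this] : ((2*Real.pi*p/N : ℝ) : ℂ) * Complex.I = (k : ℂ) * (2 * Real.pi * Complex.I))
      simpa using this
    have hp : (p : ℝ) = (k : ℝ) * N := by
      field_simp at hre
      nlinarith [Real.pi_pos, hre]
    have : (p : ℤ) = k * N := by exact_mod_cast hp
    have hk0 : 0 < k := by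
      by_contra hk0
      push_neg at hk0
      nlinarith [this, (by exact_mod_cast h1 : (1:ℤ) ≤ (p:ℤ)), (by exact_mod_cast hN : (2:ℤ) ≤ (N:ℤ))]
    nlinarith [this, (by exact_mod_cast h2 : (p:ℤ) < (N:ℤ)), hk0, (by exact_mod_cast hN : (2:ℤ) ≤ (N:ℤ))]
  have hzN : z ^ N = 1 := by
    rw [hz, ← Complex.exp_nat_mul]
    have : (N:ℂ) * (((2*Real.pi*p/N : ℝ) : ℂ) * Complex.I) = (p:ℂ) * (2 * Real.pi * Complex.I) := by
      have hNC : (N:ℂ) ≠ 0 := by exact_mod_cast hN0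
      push_cast
      field_simp
    rw [this]
    simpa using Complex.exp_int_mul_two_pi_mul_I (p : ℤ)
  have hsum : ∑ n ∈ Finset.range N, z ^ n = 0 := by
    rw [geom_sum_eq hz1, hzN]
    simp
  have hre : ∀ n : ℕ, (z ^ n).re = Real.cos ((p:ℝ)*(2*n*Real.pi/N)) := by
    intro n
    rw [hz, ← Complex.exp_nat_mul]
    have : (n:ℂ) * (((2*Real.pi*p/N : ℝ) : ℂ) * Complex.I) = ((p*(2*n*Real.pi/N) : ℝ) : ℂ) * Complex.I := by
      push_cast; ring
    rw [this, Complex.exp_ofReal_mul_I_re]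
  have hre0 : ∑ n ∈ Finset.range N, Real.cos ((p:ℝ)*(2*n*Real.pi/N)) = 0 := by
    have := congrArg Complex.re hsum
    simp only [Complex.re_sum, Complex.zero_re] at this
    rw [← this]
    apply Finset.sum_congr rfl
    intro n _
    exact (hre n).symm
  have hsplit : ∑ n ∈ Finset.range N, Real.cos ((p:ℝ)*(2*n*Real.pi/N))
      = Real.cos ((p:ℝ)*(2*(0:ℕ)*Real.pi/N)) + ∑ n ∈ Finset.Icc 1 (N-1), Real.cos ((p:ℝ)*(2*n*Real.pi/N)) := by
    rw [Finset.range_eq_Ico, Finset.sum_eq_sum_Ico_succ_bot (by omega)]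
    rw [← Finset.Ico_add_one_right_eq_Icc, show N - 1 + 1 = N from by omega]
  rw [hsplit] at hre0
  simp at hre0
  linarith

lemma Gsum (N l : ℕ) :
    ∑ m ∈ Finset.Icc 1 (l-1), 2*((l:ℝ)-(m:ℝ))*((m:ℝ)*N - (m:ℝ)^2)
      = (N:ℝ)*l*((l:ℝ)^2-1)/3 - (l:ℝ)^2*((l:ℝ)^2-1)/6 := by
  cases l with
  | zero => simp
  | succ k =>
    simp only [Nat.add_sub_cancel]
    have : ∑ m ∈ Finset.Icc 1 k, 2*(((k:ℕ):ℝ)+1-(m:ℝ))*((m:ℝ)*N - (m:ℝ)^2)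
        = ∑ m ∈ Finset.Icc 1 k, ((0:ℝ) + (2*((k:ℝ)+1)*N)*(m:ℝ) + (-2*((k:ℝ)+1)-2*N)*(m:ℝ)^2 + 2*(m:ℝ)^3) := by
      apply Finset.sum_congr rfl; intro m _; ring
    push_cast
    rw [this, sum_poly3]
    ring

lemma hcos (N : ℕ) (hN : 2 ≤ N) (n : ℕ) (h1 : 1 ≤ n) (h2 : n ≤ N-1) :
    Real.cos (2*(n:ℝ)*Real.pi/N) ≠ 1 := by
  intro h
  rw [Real.cos_eq_one_iff] at h
  obtain ⟨k, hk⟩ := h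
  have hNr : (0:ℝ) < N := by positivity
  have hpi := Real.pi_pos
  have hr : (k:ℝ)*N = n := by
    have : (k:ℝ)*(2*Real.pi)*N = 2*n*Real.pi := by
      rw [hk]; field_simp
    nlinarith [this]
  have hZ : k * (N:ℤ) = n := by exact_mod_cast hr
  have hn1 : (1:ℤ) ≤ (n:ℤ) := by exact_mod_cast h1
  have hn2 : (n:ℤ) ≤ (N:ℤ) - 1 := by
    have : n ≤ N - 1 := h2
    omega
  have hNZ : (2:ℤ) ≤ (N:ℤ) := by exact_mod_cast hN
  rcases le_or_gt k 0 with hk0 | hk0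
  · nlinarith
  · nlinarith

lemma Bsum (N m : ℕ) (hN : 2 ≤ N) (hm : m < N) :
    ∑ n ∈ Finset.Icc 1 (N-1), Kk (2*(n:ℝ)*Real.pi/N) m = (m:ℝ)*N - (m:ℝ)^2 := by
  unfold Kk
  rw [Finset.sum_add_distrib, Finset.sum_const, Nat.card_Icc, Finset.sum_comm]
  have inner : ∀ p ∈ Finset.Icc 1 (m-1),
      ∑ n ∈ Finset.Icc 1 (N-1), 2*((m:ℝ)-(p:ℝ))*Real.cos ((p:ℝ)*(2*(n:ℝ)*Real.pi/N))
        = 2*((m:ℝ)-(p:ℝ)) * (-1) := by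
    intro p hp
    simp only [Finset.mem_Icc] at hp
    rw [← Finset.mul_sum]
    congr 1
    exact cosC N p hN hp.1 (by omega)
  rw [Finset.sum_congr rfl inner]
  have : ∑ p ∈ Finset.Icc 1 (m-1), 2*((m:ℝ)-(p:ℝ)) * (-1)
      = -∑ p ∈ Finset.Icc 1 (m-1), 2*((m:ℝ)-(p:ℝ)) := by
    rw [← Finset.sum_neg_distrib]
    apply Finset.sum_congr rfl; intro p _; ring
  rw [this, sum_coeff]
  have hcard : ((N - 1 + 1 - 1 : ℕ) : ℝ) = (N:ℝ) - 1 := by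
    have : N - 1 + 1 - 1 = N - 1 := by omega
    rw [this]
    push_cast [Nat.cast_sub (by omega : 1 ≤ N)]
    ring
  rw [nsmul_eq_mul, hcard]
  ring

lemma double (N l : ℕ) (hN : 2 ≤ N) (hl : l ≤ N) :
    ∑ n ∈ Finset.Icc 1 (N-1), ∑ m ∈ Finset.Icc 1 (l-1),
        2*((l:ℝ)-(m:ℝ))*Kk (2*(n:ℝ)*Real.pi/N) m
      = (N:ℝ)*l*((l:ℝ)^2-1)/3 - (l:ℝ)^2*((l:ℝ)^2-1)/6 := by
  rw [Finset.sum_comm]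
  have step : ∀ m ∈ Finset.Icc 1 (l-1),
      ∑ n ∈ Finset.Icc 1 (N-1), 2*((l:ℝ)-(m:ℝ))*Kk (2*(n:ℝ)*Real.pi/N) m
        = 2*((l:ℝ)-(m:ℝ))*((m:ℝ)*N - (m:ℝ)^2) := by
    intro m hm
    simp only [Finset.mem_Icc] at hm
    rw [← Finset.mul_sum, Bsum N m hN (by omega)]
  rw [Finset.sum_congr rfl step, Gsum]

lemma Asum (N : ℕ) (hN : 2 ≤ N) :
    ∑ n ∈ Finset.Icc 1 (N-1), 1/(1 - Real.cos (2*(n:ℝ)*Real.pi/N))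
      = ((N:ℝ)^2 - 1)/6 := by
  have hN0 : (N:ℝ) ≠ 0 := by positivity
  have point : ∀ n ∈ Finset.Icc 1 (N-1),
      1/(1 - Real.cos (2*(n:ℝ)*Real.pi/N))
        = (1/(N:ℝ)^2) * ∑ m ∈ Finset.Icc 1 (N-1), 2*((N:ℝ)-(m:ℝ))*Kk (2*(n:ℝ)*Real.pi/N) m := by
    intro n hn
    simp only [Finset.mem_Icc] at hn
    have hc := hcos N hN n hn.1 hn.2
    have h0 := L4 (2*(n:ℝ)*Real.pi/N) hc N
    have hone : Real.cos ((N:ℝ)*(2*(n:ℝ)*Real.pi/N)) = 1 := by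
      rw [show (N:ℝ)*(2*(n:ℝ)*Real.pi/N) = (n:ℝ)*(2*Real.pi) by field_simp]
      exact Real.cos_nat_mul_two_pi n
    rw [hone] at h0
    simp only [sub_self, zero_div] at h0
    have hd : 1 - Real.cos (2*(n:ℝ)*Real.pi/N) ≠ 0 := by
      intro h; apply hc; linarith [sub_eq_zero.mp h]
    have hsol : ∑ m ∈ Finset.Icc 1 (N-1), 2*((N:ℝ)-(m:ℝ))*Kk (2*(n:ℝ)*Real.pi/N) m
        = (N:ℝ)^2/(1 - Real.cos (2*(n:ℝ)*Real.pi/N)) := by linarith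
    rw [hsol]
    field_simp
  rw [Finset.sum_congr rfl point, ← Finset.mul_sum, double N N hN le_rfl]
  field_simp
  ring

theorem cycle_trig_sum_GN (N : ℕ) (hN : 2 ≤ N) (l : ℕ) (hl : l ≤ N) :
    (1 / (N : ℝ)) * ∑ n ∈ Finset.Icc 1 (N - 1),
        (1 - Real.cos (2 * l * n * Real.pi / N)) / (1 - Real.cos (2 * n * Real.pi / N)) ^ 2
      = (l : ℝ) ^ 4 / (6 * N) - (l : ℝ) ^ 3 / 3 + (l : ℝ) ^ 2 * N / 6
          - (l : ℝ) ^ 2 / (3 * N) + (l : ℝ) / 3 := by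
  have hN0 : (N:ℝ) ≠ 0 := by positivity
  have hrw : ∀ n ∈ Finset.Icc 1 (N-1),
      (1 - Real.cos (2 * l * n * Real.pi / N)) / (1 - Real.cos (2 * n * Real.pi / N)) ^ 2
        = (l:ℝ)^2 * (1/(1 - Real.cos (2*(n:ℝ)*Real.pi/N)))
          - ∑ m ∈ Finset.Icc 1 (l-1), 2*((l:ℝ)-(m:ℝ))*Kk (2*(n:ℝ)*Real.pi/N) m := by
    intro n hn
    simp only [Finset.mem_Icc] at hn
    have hc := hcos N hN n hn.1 hn.2
    have h0 := L4 (2*(n:ℝ)*Real.pi/N) hc l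
    rw [show (l:ℝ)*(2*(n:ℝ)*Real.pi/N) = 2*(l:ℝ)*(n:ℝ)*Real.pi/N by ring] at h0
    rw [show 2*(n:ℝ)*Real.pi/N = 2*(n:ℝ)*Real.pi/N from rfl]
    rw [h0]
    ring
  rw [Finset.sum_congr rfl hrw, Finset.sum_sub_distrib, ← Finset.mul_sum,
    Asum N hN, double N l hN hl]
  field_simp
  ring
end

section
/- For all integers N ≥ 2 and all integers l with 1 ≤ l ≤ N, the real part of (1/N) · Σ_{n=1}^{N−1} (1 − e^{2ilnπ/N}) / (1 − e^{2inπ/N})² equals l²/(2N) − l/N − l/2 + 1. -/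
open Finset Complex

lemma aux_pair (z : ℂ) (hz0 : z ≠ 0) (hz1 : z ≠ 1) :
    1/(1-z) + 1/(1-z⁻¹) = 1 := by
  have h1 : (1:ℂ) - z ≠ 0 := sub_ne_zero.mpr (Ne.symm hz1)
  have h2 : (1:ℂ) - z⁻¹ ≠ 0 := by
    rw [sub_ne_zero]
    intro h
    exact hz1 (by rw [eq_comm, inv_eq_one] at h; exact h)
  rw [div_add_div _ _ h1 h2, div_eq_one_iff_eq (mul_ne_zero h1 h2)]
  field_simp
  ring

lemma aux_f0 (N : ℕ) (hN : 2 ≤ N) (ζ : ℂ) (hζ : IsPrimitiveRoot ζ N) :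
    ∑ n ∈ Icc 1 (N-1), (1:ℂ)/(1-ζ^n) = ((N:ℂ)-1)/2 := by
  have hNz : N ≠ 0 := by omega
  have hζ0 : ζ ≠ 0 := hζ.ne_zero hNz
  have hne : ∀ n, 1 ≤ n → n ≤ N-1 → ζ^n ≠ 1 := by
    intro n h1 h2 h
    rw [hζ.pow_eq_one_iff_dvd] at h
    have := Nat.le_of_dvd (by omega) h
    omega
  have key : ∑ n ∈ Icc 1 (N-1), (1:ℂ)/(1-ζ^n)
      = ∑ n ∈ Icc 1 (N-1), (1:ℂ)/(1-ζ^(N-n)) := by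
    apply Finset.sum_nbij' (fun n => N - n) (fun n => N - n)
    all_goals intro a ha; simp only [mem_Icc] at ha
    · simp only [mem_Icc]; omega
    · simp only [mem_Icc]; omega
    · omega
    · omega
    · rw [Nat.sub_sub_self (by omega : a ≤ N)]
  have hinv : ∀ n, 1 ≤ n → n ≤ N-1 → ζ^(N-n) = (ζ^n)⁻¹ := by
    intro n h1 h2
    have h : ζ^(N-n) * ζ^n = 1 := by
      rw [← pow_add, Nat.sub_add_cancel (by omega), hζ.pow_eq_one]
    exact eq_inv_of_mul_eq_one_left h
  have h2 : (∑ n ∈ Icc 1 (N-1), (1:ℂ)/(1-ζ^n)) + (∑ n ∈ Icc 1 (N-1), (1:ℂ)/(1-ζ^n))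
      = (N:ℂ) - 1 := by
    nth_rewrite 2 [key]
    rw [← Finset.sum_add_distrib]
    calc ∑ n ∈ Icc 1 (N-1), ((1:ℂ)/(1-ζ^n) + 1/(1-ζ^(N-n)))
        = ∑ n ∈ Icc 1 (N-1), (1:ℂ) := by
          refine Finset.sum_congr rfl (fun n hn => ?_)
          simp only [mem_Icc] at hn
          rw [hinv n hn.1 hn.2]
          exact aux_pair _ (pow_ne_zero _ hζ0) (hne n hn.1 hn.2)
      _ = (N:ℂ) - 1 := by
          rw [Finset.sum_const, Nat.card_Icc]
          simp only [nsmul_eq_mul, mul_one]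
          simp only [Nat.add_sub_cancel]
          rw [Nat.cast_sub (by omega : 1 ≤ N)]
          push_cast
          ring
  linear_combination h2 / 2

section
variable (N : ℕ) (ζ : ℂ)

lemma aux_charsum (hN : 2 ≤ N) (hζ : IsPrimitiveRoot ζ N) (k : ℕ)
    (hk1 : 1 ≤ k) (hk2 : k ≤ N - 1) :
    ∑ n ∈ Icc 1 (N-1), (ζ^n)^k = -1 := by
  have hu1 : ζ^k ≠ 1 := by
    intro h
    rw [hζ.pow_eq_one_iff_dvd] at h
    have := Nat.le_of_dvd (by omega) h
    omega
  have huN : (ζ^k)^N = 1 := by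
    rw [← pow_mul, mul_comm, pow_mul, hζ.pow_eq_one, one_pow]
  have hr : ∑ n ∈ range N, (ζ^k)^n = 0 := by
    rw [geom_sum_eq hu1, huN]
    simp
  have hins : range N = insert 0 (Icc 1 (N-1)) := by
    ext x; simp only [mem_range, mem_insert, mem_Icc]; omega
  rw [hins, Finset.sum_insert (by simp)] at hr
  have : ∑ n ∈ Icc 1 (N-1), (ζ^n)^k = ∑ n ∈ Icc 1 (N-1), (ζ^k)^n := by
    refine Finset.sum_congr rfl (fun n _ => ?_)
    rw [← pow_mul, ← pow_mul, mul_comm]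
  rw [this]
  simp only [pow_zero] at hr
  linear_combination hr
end

lemma aux_ne (N : ℕ) (hN : 2 ≤ N) (ζ : ℂ) (hζ : IsPrimitiveRoot ζ N)
    {n : ℕ} (h1 : 1 ≤ n) (h2 : n ≤ N - 1) : (1:ℂ) - ζ^n ≠ 0 := by
  rw [sub_ne_zero]
  intro h
  rw [eq_comm, hζ.pow_eq_one_iff_dvd] at h
  have := Nat.le_of_dvd (by omega) h
  omega

lemma aux_Fstep (N : ℕ) (hN : 2 ≤ N) (ζ : ℂ) (hζ : IsPrimitiveRoot ζ N) (k : ℕ) :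
    (∑ n ∈ Icc 1 (N-1), (ζ^n)^k/(1-ζ^n)) - (∑ n ∈ Icc 1 (N-1), (ζ^n)^(k+1)/(1-ζ^n))
      = ∑ n ∈ Icc 1 (N-1), (ζ^n)^k := by
  rw [← Finset.sum_sub_distrib]
  refine Finset.sum_congr rfl (fun n hn => ?_)
  simp only [mem_Icc] at hn
  have h := aux_ne N hN ζ hζ hn.1 hn.2
  field_simp
  ring

lemma aux_Fformula (N : ℕ) (hN : 2 ≤ N) (ζ : ℂ) (hζ : IsPrimitiveRoot ζ N) (k : ℕ)
    (hk1 : 1 ≤ k) (hk2 : k ≤ N) :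
    ∑ n ∈ Icc 1 (N-1), (ζ^n)^k/(1-ζ^n) = (k:ℂ) - 1 - ((N:ℂ)-1)/2 := by
  revert hk2
  induction k, hk1 using Nat.le_induction with
  | base =>
    intro _
    have h := aux_Fstep N hN ζ hζ 0
    have h0 : ∑ n ∈ Icc 1 (N-1), (ζ^n)^0/(1-ζ^n) = ((N:ℂ)-1)/2 := by
      rw [← aux_f0 N hN ζ hζ]
      exact Finset.sum_congr rfl (fun n _ => by rw [pow_zero])
    have hc : ∑ n ∈ Icc 1 (N-1), (ζ^n)^0 = (N:ℂ) - 1 := by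
      simp only [pow_zero, Finset.sum_const, Nat.card_Icc, Nat.add_sub_cancel,
        nsmul_eq_mul, mul_one]
      rw [Nat.cast_sub (by omega : 1 ≤ N)]
      push_cast; ring
    rw [h0, hc] at h
    push_cast
    linear_combination -h
  | succ k hk ih =>
    intro hk2
    have h := aux_Fstep N hN ζ hζ k
    rw [ih (by omega), aux_charsum N ζ hN hζ k hk (by omega)] at h
    push_cast
    linear_combination -h

theorem cycle_complex_sum_HN (N : ℕ) (hN : 2 ≤ N) (l : ℕ) (hl1 : 1 ≤ l) (hl2 : l ≤ N) :
    ((1 / (N : ℂ)) * ∑ n ∈ Finset.Icc 1 (N - 1),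
        (1 - Complex.exp (2 * Complex.I * l * n * Real.pi / N))
          / (1 - Complex.exp (2 * Complex.I * n * Real.pi / N)) ^ 2).re
      = (l : ℝ) ^ 2 / (2 * N) - (l : ℝ) / N - (l : ℝ) / 2 + 1 := by
  have hNz : N ≠ 0 := by omega
  set ζ : ℂ := Complex.exp (2 * ↑Real.pi * I / N) with hζdef
  have hζ : IsPrimitiveRoot ζ N := Complex.isPrimitiveRoot_exp N hNz
  have hexp1 : ∀ n : ℕ, Complex.exp (2 * Complex.I * n * Real.pi / N) = ζ^n := by
    intro n
    rw [hζdef, ← Complex.exp_nat_mul]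
    congr 1
    ring
  have hexp2 : ∀ n : ℕ, Complex.exp (2 * Complex.I * l * n * Real.pi / N) = (ζ^n)^l := by
    intro n
    rw [← pow_mul, hζdef, ← Complex.exp_nat_mul]
    congr 1
    push_cast
    ring
  have hsum : ∑ n ∈ Finset.Icc 1 (N - 1),
        (1 - Complex.exp (2 * Complex.I * l * n * Real.pi / N))
          / (1 - Complex.exp (2 * Complex.I * n * Real.pi / N)) ^ 2
      = ∑ k ∈ range l, ∑ n ∈ Icc 1 (N-1), (ζ^n)^k/(1-ζ^n) := by
    rw [Finset.sum_comm]
    refine Finset.sum_congr rfl (fun n hn => ?_)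
    simp only [mem_Icc] at hn
    rw [hexp1, hexp2]
    have h1 : (1:ℂ) - ζ^n ≠ 0 := aux_ne N hN ζ hζ hn.1 hn.2
    have hgs : (1:ℂ) - (ζ^n)^l = (∑ k ∈ range l, (ζ^n)^k) * (1 - ζ^n) := by
      linear_combination geom_sum_mul (ζ^n) l
    rw [hgs, ← Finset.sum_div, pow_two]
    rw [show ((1:ℂ)-ζ^n)*(1-ζ^n) = (1-ζ^n)*(1-ζ^n) from rfl]
    field_simp
  have hrange : range l = insert 0 (Icc 1 (l-1)) := by
    ext x; simp only [mem_range, mem_insert, mem_Icc]; omega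
  have hF0 : ∑ n ∈ Icc 1 (N-1), (ζ^n)^0/(1-ζ^n) = ((N:ℂ)-1)/2 := by
    rw [← aux_f0 N hN ζ hζ]
    exact Finset.sum_congr rfl (fun n _ => by rw [pow_zero])
  have hFk : ∑ k ∈ Icc 1 (l-1), ∑ n ∈ Icc 1 (N-1), (ζ^n)^k/(1-ζ^n)
      = (∑ k ∈ Icc 1 (l-1), (k:ℂ)) - (↑(l-1) : ℂ) * (1 + ((N:ℂ)-1)/2) := by
    rw [Finset.sum_congr rfl (fun k hk => by
      simp only [mem_Icc] at hk
      exact aux_Fformula N hN ζ hζ k hk.1 (by omega))]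
    rw [Finset.sum_sub_distrib, Finset.sum_sub_distrib, Finset.sum_const,
      Finset.sum_const, Nat.card_Icc, Nat.add_sub_cancel]
    ring
  have hId : (∑ k ∈ Icc 1 (l-1), (k:ℂ)) * 2 = (↑(l-1) : ℂ) * l := by
    have hnat : (∑ k ∈ Icc 1 (l-1), k) * 2 = l * (l-1) := by
      have h' : ∑ k ∈ Icc 1 (l-1), k = ∑ k ∈ range l, k := by
        rw [hrange, Finset.sum_insert (by simp)]
        simp
      rw [h', Finset.sum_range_id_mul_two]
    calc (∑ k ∈ Icc 1 (l-1), (k:ℂ)) * 2 = ((∑ k ∈ Icc 1 (l-1), k : ℕ) : ℂ) * 2 := by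
          push_cast; ring
      _ = (↑(l-1) : ℂ) * l := by
          norm_cast
          rw [hnat, Nat.mul_comm]
  have hval : (1 / (N : ℂ)) * ∑ n ∈ Finset.Icc 1 (N - 1),
        (1 - Complex.exp (2 * Complex.I * l * n * Real.pi / N))
          / (1 - Complex.exp (2 * Complex.I * n * Real.pi / N)) ^ 2
      = (((l : ℝ) ^ 2 / (2 * N) - (l : ℝ) / N - (l : ℝ) / 2 + 1 : ℝ) : ℂ) := by
    rw [hsum, hrange, Finset.sum_insert (by simp), hF0, hFk]
    have hsk : (∑ k ∈ Icc 1 (l-1), (k:ℂ)) = (↑(l-1) : ℂ) * l / 2 := by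
      linear_combination hId / 2
    rw [hsk, Nat.cast_sub hl1]
    have hN0 : (N:ℂ) ≠ 0 := Nat.cast_ne_zero.mpr hNz
    push_cast
    field_simp
    ring
  rw [hval, Complex.ofReal_re]
end

section
/- For all integers N ≥ 2 and all integers l with 1 ≤ l ≤ 2N, the real part of (1/N) · Σ_{n=1}^{N−1} (1 − e^{ilnπ/N}) / (1 − e^{inπ/N})² equals (−4N(l−2) + 2l² − 4l + (−1)^l − 1)/(8N). -/
open Finset Complex

private lemma expIN_ne_one (N k : ℕ) (hN : 0 < N) (hk1 : 1 ≤ k) (hk2 : k < 2 * N) :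
    Complex.exp (Complex.I * k * Real.pi / N) ≠ 1 := by
  intro h
  rw [Complex.exp_eq_one_iff] at h
  obtain ⟨m, hm⟩ := h
  have hN' : (N : ℂ) ≠ 0 := by exact_mod_cast hN.ne'
  have hpi : (Real.pi : ℂ) ≠ 0 := by exact_mod_cast Real.pi_ne_zero
  field_simp at hm
  have h2 : (Complex.I * Real.pi) * ((k:ℤ):ℂ) = (Complex.I * Real.pi) * ((2*m*N:ℤ):ℂ) := by
    push_cast; linear_combination (Complex.I * Real.pi) * hm
  have h3 : (k:ℤ) = 2*m*N := by
    exact_mod_cast mul_left_cancel₀ (mul_ne_zero Complex.I_ne_zero hpi) h2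
  rcases (by omega : 0 < m ∨ m ≤ 0) with h | h
  · nlinarith [h3]
  · nlinarith [h3]

private lemma hns (r : ℝ) : Complex.normSq (Complex.exp ((r:ℂ) * Complex.I)) = 1 := by
  rw [← Complex.sq_norm, Complex.norm_exp_ofReal_mul_I]; norm_num

private lemma re_inv_one_sub (z : ℂ) (hz : Complex.normSq z = 1) (h1 : z ≠ 1) :
    ((1 - z)⁻¹).re = 1 / 2 := by
  have hre : z.re ≠ 1 := by
    intro h
    apply h1
    have : z.im ^ 2 = 0 := by
      have := hz; rw [Complex.normSq_apply] at this; nlinarith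
    have him : z.im = 0 := by nlinarith
    exact Complex.ext h him
  rw [Complex.inv_re]
  have h2 : Complex.normSq (1 - z) = 2 * (1 - z.re) := by
    rw [Complex.normSq_apply] at hz ⊢
    simp [Complex.sub_re, Complex.sub_im]
    nlinarith
  rw [h2]
  have h3 : (1 - z).re = 1 - z.re := by simp
  rw [h3]
  have hne : 1 - z.re ≠ 0 := by intro h; apply hre; linarith [h]
  field_simp

private lemma re_ratio (z : ℂ) (hz : Complex.normSq z = 1) :
    ((1 + z) / (1 - z)).re = 0 := by
  rw [Complex.div_re]
  have h : (1 + z).re * (1 - z).re + (1 + z).im * (1 - z).im = 0 := by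
    rw [Complex.normSq_apply] at hz
    simp [Complex.add_re, Complex.add_im, Complex.sub_re, Complex.sub_im]
    nlinarith
  rw [← add_div, h]; simp

private lemma geom_re (N k : ℕ) (hN : 2 ≤ N) (hk1 : 1 ≤ k) (hk2 : k < 2 * N) :
    (∑ n ∈ Finset.Icc 1 (N - 1), Complex.exp (Complex.I * k * n * Real.pi / N)).re
      = if Even k then -1 else 0 := by
  have hN0 : 0 < N := by omega
  set z := Complex.exp (Complex.I * k * Real.pi / N) with hzdef
  have hz1 : z ≠ 1 := expIN_ne_one N k hN0 hk1 hk2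
  have hterm : ∀ n : ℕ, Complex.exp (Complex.I * k * n * Real.pi / N) = z ^ n := by
    intro n
    rw [hzdef, ← Complex.exp_nat_mul]
    congr 1; ring
  have hIcc : Finset.Icc 1 (N - 1) = Finset.Ico 1 N := by
    rw [← Finset.Ico_add_one_right_eq_Icc]; congr 1; omega
  rw [Finset.sum_congr rfl (fun n _ => hterm n), hIcc]
  have hsum : ∑ n ∈ Finset.Ico 1 N, z ^ n = (∑ n ∈ Finset.range N, z ^ n) - 1 := by
    rw [Finset.range_eq_Ico, ← Finset.sum_Ico_consecutive _ (Nat.zero_le 1) (by omega : 1 ≤ N)]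
    simp
  have hgeom := geom_sum_eq hz1 N
  have hzN : z ^ N = (-1 : ℂ) ^ k := by
    rw [hzdef, ← Complex.exp_nat_mul]
    have hN' : (N : ℂ) ≠ 0 := by exact_mod_cast hN0.ne'
    have h : (N : ℂ) * (Complex.I * k * Real.pi / N) = k * (Real.pi * Complex.I) := by
      field_simp
    rw [h, Complex.exp_nat_mul, Complex.exp_pi_mul_I]
  rw [hsum, hgeom, hzN]
  rcases Nat.even_or_odd k with hk | hk
  · rw [hk.neg_one_pow]
    simp [hk]
  · rw [hk.neg_one_pow]
    have h2 : ((-1 : ℂ) - 1) / (z - 1) - 1 = 2 * (1 - z)⁻¹ - 1 := by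
      have h1 : z - 1 ≠ 0 := sub_ne_zero.mpr hz1
      have h2' : (1:ℂ) - z ≠ 0 := fun h => h1 (by linear_combination -h)
      field_simp
      ring
    rw [h2]
    have hnsz : Complex.normSq z = 1 := by
      rw [hzdef, show Complex.I * k * Real.pi / N = ((k * Real.pi / N : ℝ) : ℂ) * Complex.I by
        push_cast; ring]
      exact hns _
    have h3 := re_inv_one_sub z hnsz hz1
    simp [Complex.sub_re, Complex.mul_re, h3, Nat.not_even_iff_odd.mpr hk]

private lemma aux_TN (N : ℕ) (hN : 2 ≤ N) : ∀ l : ℕ, 1 ≤ l → l ≤ 2 * N →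
    ((1 / (N : ℂ)) * ∑ n ∈ Finset.Icc 1 (N - 1),
        (1 - Complex.exp (Complex.I * l * n * Real.pi / N))
          / (1 - Complex.exp (Complex.I * n * Real.pi / N)) ^ 2).re
      = (-4 * (N : ℝ) * ((l : ℝ) - 2) + 2 * (l : ℝ) ^ 2 - 4 * (l : ℝ)
          + (-1 : ℝ) ^ l - 1) / (8 * N) := by
  have hN0 : 0 < N := by omega
  have hNr : (N : ℝ) ≠ 0 := by positivity
  have hre : ∀ z : ℂ, ((1 / (N : ℂ)) * z).re = z.re / N := by
    intro z
    rw [show (1 / (N : ℂ)) = ((1 / (N:ℝ) : ℝ) : ℂ) by push_cast; ring, Complex.re_ofReal_mul]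
    ring
  have hwne : ∀ n, 1 ≤ n → n ≤ N - 1 →
      (1 : ℂ) - Complex.exp (Complex.I * n * Real.pi / N) ≠ 0 := by
    intro n h1 h2
    exact sub_ne_zero.mpr (Ne.symm (expIN_ne_one N n hN0 h1 (by omega)))
  have hwns : ∀ n : ℕ, Complex.normSq (Complex.exp (Complex.I * n * Real.pi / N)) = 1 := by
    intro n
    rw [show Complex.I * n * Real.pi / N = ((n * Real.pi / N : ℝ) : ℂ) * Complex.I by
      push_cast; ring]
    exact hns _
  intro l
  induction l using Nat.strong_induction_on with
  | _ l ih =>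
    intro hl1 hl2
    rcases (by omega : l = 1 ∨ l = 2 ∨ 3 ≤ l) with rfl | rfl | hl3
    · -- l = 1
      have hterm : ∀ n ∈ Finset.Icc 1 (N - 1),
          (1 - Complex.exp (Complex.I * (1:ℕ) * n * Real.pi / N))
            / (1 - Complex.exp (Complex.I * n * Real.pi / N)) ^ 2
          = (1 - Complex.exp (Complex.I * n * Real.pi / N))⁻¹ := by
        intro n hn
        simp only [Finset.mem_Icc] at hn
        have hd := hwne n hn.1 hn.2
        rw [show Complex.I * ((1:ℕ):ℂ) * n * Real.pi / N = Complex.I * n * Real.pi / N by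
          push_cast; ring]
        field_simp
      rw [Finset.sum_congr rfl hterm, hre, Complex.re_sum]
      rw [Finset.sum_congr rfl (fun n hn => by
        simp only [Finset.mem_Icc] at hn
        exact re_inv_one_sub _ (hwns n) (Ne.symm (fun h => hwne n hn.1 hn.2 (by rw [← h]; ring))))]
      rw [Finset.sum_const, Nat.card_Icc, nsmul_eq_mul]
      have hc : ((N - 1 + 1 - 1 : ℕ) : ℝ) = (N : ℝ) - 1 := by
        push_cast [Nat.cast_sub (by omega : 1 ≤ N)]; ring
      rw [hc]
      norm_num
      field_simp
      ring
    · -- l = 2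
      have hterm : ∀ n ∈ Finset.Icc 1 (N - 1),
          (1 - Complex.exp (Complex.I * (2:ℕ) * n * Real.pi / N))
            / (1 - Complex.exp (Complex.I * n * Real.pi / N)) ^ 2
          = (1 + Complex.exp (Complex.I * n * Real.pi / N))
            / (1 - Complex.exp (Complex.I * n * Real.pi / N)) := by
        intro n hn
        simp only [Finset.mem_Icc] at hn
        have hd := hwne n hn.1 hn.2
        have h2 : Complex.exp (Complex.I * ((2:ℕ):ℂ) * n * Real.pi / N)
            = Complex.exp (Complex.I * n * Real.pi / N) * Complex.exp (Complex.I * n * Real.pi / N) := by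
          rw [← Complex.exp_add]; congr 1; push_cast; ring
        rw [h2]
        field_simp
        ring
      rw [Finset.sum_congr rfl hterm, hre, Complex.re_sum]
      rw [Finset.sum_congr rfl (fun n hn => re_ratio _ (hwns n))]
      norm_num
    · -- recursion
      have key : (∑ n ∈ Finset.Icc 1 (N - 1),
            (1 - Complex.exp (Complex.I * l * n * Real.pi / N))
              / (1 - Complex.exp (Complex.I * n * Real.pi / N)) ^ 2)
          = 2 * (∑ n ∈ Finset.Icc 1 (N - 1),
            (1 - Complex.exp (Complex.I * (l-1:ℕ) * n * Real.pi / N))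
              / (1 - Complex.exp (Complex.I * n * Real.pi / N)) ^ 2)
          - (∑ n ∈ Finset.Icc 1 (N - 1),
            (1 - Complex.exp (Complex.I * (l-2:ℕ) * n * Real.pi / N))
              / (1 - Complex.exp (Complex.I * n * Real.pi / N)) ^ 2)
          - ∑ n ∈ Finset.Icc 1 (N - 1), Complex.exp (Complex.I * (l-2:ℕ) * n * Real.pi / N) := by
        rw [Finset.mul_sum, ← Finset.sum_sub_distrib, ← Finset.sum_sub_distrib]
        apply Finset.sum_congr rfl
        intro n hn
        simp only [Finset.mem_Icc] at hn
        have hd := hwne n hn.1 hn.2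
        have hc2 : ((l - 2 : ℕ) : ℂ) = (l : ℂ) - 2 := by
          rw [Nat.cast_sub (by omega : 2 ≤ l)]; norm_num
        have hc1 : ((l - 1 : ℕ) : ℂ) = (l : ℂ) - 1 := by
          rw [Nat.cast_sub (by omega : 1 ≤ l)]; norm_num
        have ha : Complex.exp (Complex.I * l * n * Real.pi / N)
            = Complex.exp (Complex.I * (l-2:ℕ) * n * Real.pi / N)
              * Complex.exp (Complex.I * n * Real.pi / N)
              * Complex.exp (Complex.I * n * Real.pi / N) := by
          rw [← Complex.exp_add, ← Complex.exp_add]; congr 1; rw [hc2]; ring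
        have hb : Complex.exp (Complex.I * (l-1:ℕ) * n * Real.pi / N)
            = Complex.exp (Complex.I * (l-2:ℕ) * n * Real.pi / N)
              * Complex.exp (Complex.I * n * Real.pi / N) := by
          rw [← Complex.exp_add]; congr 1; rw [hc1, hc2]; ring
        rw [ha, hb]
        field_simp
        ring
      have ihB := ih (l-1) (by omega) (by omega) (by omega)
      rw [hre] at ihB
      have ihC := ih (l-2) (by omega) (by omega) (by omega)
      rw [hre] at ihC
      have hD := geom_re N (l-2) hN (by omega) (by omega)
      rw [hre, key]
      have hsplit : ∀ x y z : ℂ, (2*x - y - z).re = 2*x.re - y.re - z.re := by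
        intro x y z; simp [Complex.sub_re, Complex.mul_re]
      rw [hsplit]
      rw [show ∀ a b c : ℝ, (2*a - b - c)/(N:ℝ) = 2*(a/N) - b/N - c/N from fun a b c => by ring]
      rw [ihB, ihC, hD]
      have hcast1 : ((l - 1 : ℕ) : ℝ) = (l : ℝ) - 1 := by
        rw [Nat.cast_sub (by omega : 1 ≤ l)]; norm_num
      have hcast2 : ((l - 2 : ℕ) : ℝ) = (l : ℝ) - 2 := by
        rw [Nat.cast_sub (by omega : 2 ≤ l)]; norm_num
      rw [hcast1, hcast2]
      rcases Nat.even_or_odd l with he | ho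
      · have hev2 : Even (l - 2) := by
          rcases he with ⟨m, hm⟩; exact ⟨m - 1, by omega⟩
        have hod1 : Odd (l - 1) := by
          rcases he with ⟨m, hm⟩; exact ⟨m - 1, by omega⟩
        rw [if_pos hev2, he.neg_one_pow, hod1.neg_one_pow, hev2.neg_one_pow]
        field_simp
        ring
      · have hod2 : Odd (l - 2) := by
          rcases ho with ⟨m, hm⟩; exact ⟨m - 1, by omega⟩
        have hev1 : Even (l - 1) := by
          rcases ho with ⟨m, hm⟩; exact ⟨m, by omega⟩
        rw [if_neg (Nat.not_even_iff_odd.mpr hod2), ho.neg_one_pow, hev1.neg_one_pow,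
          hod2.neg_one_pow]
        field_simp
        ring

theorem path_complex_sum_TN (N : ℕ) (hN : 2 ≤ N) (l : ℕ) (hl1 : 1 ≤ l) (hl2 : l ≤ 2 * N) :
    ((1 / (N : ℂ)) * ∑ n ∈ Finset.Icc 1 (N - 1),
        (1 - Complex.exp (Complex.I * l * n * Real.pi / N))
          / (1 - Complex.exp (Complex.I * n * Real.pi / N)) ^ 2).re
      = (-4 * (N : ℝ) * ((l : ℝ) - 2) + 2 * (l : ℝ) ^ 2 - 4 * (l : ℝ)
          + (-1 : ℝ) ^ l - 1) / (8 * N) := by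
  exact aux_TN N hN l hl1 hl2
end

section
/- For all integers N ≥ 2, one has Σ_{n=1}^{N−1} 1/sin⁴(nπ/N) = (N⁴ + 10N² − 11)/45. -/
open Finset Real


lemma aux_step (j M : ℕ) (z : ℂ) :
    (1 - z) * ∑ k ∈ range M, ((k + j + 1).choose (j + 1) : ℂ) * z ^ k
      = ∑ k ∈ range M, ((k + j).choose j : ℂ) * z ^ k - ((M + j).choose (j + 1) : ℂ) * z ^ M := by
  induction M with
  | zero => simp [Nat.choose_eq_zero_of_lt (Nat.lt_succ_self j)]
  | succ M ih =>
    rw [sum_range_succ, sum_range_succ, mul_add]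
    have hp : ((M + j + 1).choose (j + 1) : ℂ)
        = ((M + j).choose j : ℂ) + ((M + j).choose (j + 1) : ℂ) := by
      rw [← Nat.cast_add, ← Nat.choose_succ_succ]
    have hb : ((M + 1 + j).choose (j + 1) : ℂ) = ((M + j + 1).choose (j + 1) : ℂ) := by
      rw [show M + 1 + j = M + j + 1 by ring]
    rw [hb]
    push_cast
    linear_combination ih + z ^ M * hp

lemma cc2 (n : ℕ) : (((n + 1).choose 2 : ℕ) : ℂ) * 2 = (n : ℂ) * (n + 1) := by
  induction n with
  | zero => simp
  | succ n ih =>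
    rw [Nat.choose_succ_succ (n + 1) 1]
    push_cast [Nat.choose_one_right]
    linear_combination ih

lemma cc3 (n : ℕ) : (((n + 2).choose 3 : ℕ) : ℂ) * 6 = (n : ℂ) * (n + 1) * (n + 2) := by
  induction n with
  | zero => simp
  | succ n ih =>
    rw [show n + 1 + 2 = (n + 2) + 1 from rfl, Nat.choose_succ_succ (n + 2) 2]
    push_cast
    linear_combination (norm := (push_cast; ring1)) ih + 3 * cc2 (n + 1)

lemma cc4 (n : ℕ) : (((n + 3).choose 4 : ℕ) : ℂ) * 24 = (n : ℂ) * (n + 1) * (n + 2) * (n + 3) := by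
  induction n with
  | zero => simp
  | succ n ih =>
    rw [show n + 1 + 3 = (n + 3) + 1 from rfl, Nat.choose_succ_succ (n + 3) 3]
    push_cast
    linear_combination (norm := (push_cast; ring1)) ih + 4 * cc3 (n + 1)

lemma cc5 (n : ℕ) : (((n + 4).choose 5 : ℕ) : ℂ) * 120 = (n : ℂ) * (n + 1) * (n + 2) * (n + 3) * (n + 4) := by
  induction n with
  | zero => simp
  | succ n ih =>
    rw [show n + 1 + 4 = (n + 4) + 1 from rfl, Nat.choose_succ_succ (n + 4) 4]
    push_cast
    linear_combination (norm := (push_cast; ring1)) ih + 5 * cc4 (n + 1)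

lemma per_root (N : ℕ) (hN : 2 ≤ N) (z : ℂ) (hzN : z ^ N = 1) (hz1 : z ≠ 1) :
    (∑ k ∈ range N, ((k + 1).choose 1 : ℂ) * z ^ k) = -(N : ℂ) * (1 - z)⁻¹
    ∧ (∑ k ∈ range N, ((k + 2).choose 2 : ℂ) * z ^ k)
        = -(N : ℂ) * ((1 - z)⁻¹) ^ 2 - ((N + 1).choose 2 : ℂ) * (1 - z)⁻¹
    ∧ (∑ k ∈ range N, ((k + 3).choose 3 : ℂ) * z ^ k)
        = -(N : ℂ) * ((1 - z)⁻¹) ^ 3 - ((N + 1).choose 2 : ℂ) * ((1 - z)⁻¹) ^ 2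
          - ((N + 2).choose 3 : ℂ) * (1 - z)⁻¹
    ∧ (∑ k ∈ range N, ((k + 4).choose 4 : ℂ) * z ^ k)
        = -(N : ℂ) * ((1 - z)⁻¹) ^ 4 - ((N + 1).choose 2 : ℂ) * ((1 - z)⁻¹) ^ 3
          - ((N + 2).choose 3 : ℂ) * ((1 - z)⁻¹) ^ 2 - ((N + 3).choose 4 : ℂ) * (1 - z)⁻¹ := by
  have hw : (1 : ℂ) - z ≠ 0 := by
    intro h; exact hz1 (by linear_combination -h)
  have hinv : (1 - z) * (1 - z)⁻¹ = 1 := mul_inv_cancel₀ hw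
  set w : ℂ := (1 - z)⁻¹ with hwdef
  have h0 : ∑ k ∈ range N, z ^ k = 0 := by
    rw [geom_sum_eq hz1, hzN, sub_self, zero_div]
  have s1 := aux_step 0 N z
  simp only [Nat.add_zero, Nat.choose_zero_right, Nat.cast_one, one_mul, zero_add,
    hzN, mul_one] at s1
  rw [h0] at s1
  rw [Nat.choose_one_right] at s1
  -- s1 : (1 - z) * F1 = 0 - N
  have s2 := aux_step 1 N z
  have s3 := aux_step 2 N z
  have s4 := aux_step 3 N z
  simp only [add_assoc, Nat.reduceAdd, hzN, mul_one] at s2 s3 s4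
  have hF1 : (∑ k ∈ range N, ((k + 1).choose 1 : ℂ) * z ^ k) = -(N : ℂ) * w := by
    linear_combination w * s1 - (∑ k ∈ range N, ((k + 1).choose 1 : ℂ) * z ^ k) * hinv
  have hF2 : (∑ k ∈ range N, ((k + 2).choose 2 : ℂ) * z ^ k)
      = -(N : ℂ) * w ^ 2 - ((N + 1).choose 2 : ℂ) * w := by
    linear_combination w * s2 - (∑ k ∈ range N, ((k + 2).choose 2 : ℂ) * z ^ k) * hinv + w * hF1
  have hF3 : (∑ k ∈ range N, ((k + 3).choose 3 : ℂ) * z ^ k)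
      = -(N : ℂ) * w ^ 3 - ((N + 1).choose 2 : ℂ) * w ^ 2 - ((N + 2).choose 3 : ℂ) * w := by
    linear_combination w * s3 - (∑ k ∈ range N, ((k + 3).choose 3 : ℂ) * z ^ k) * hinv + w * hF2
  have hF4 : (∑ k ∈ range N, ((k + 4).choose 4 : ℂ) * z ^ k)
      = -(N : ℂ) * w ^ 4 - ((N + 1).choose 2 : ℂ) * w ^ 3 - ((N + 2).choose 3 : ℂ) * w ^ 2
        - ((N + 3).choose 4 : ℂ) * w := by
    linear_combination w * s4 - (∑ k ∈ range N, ((k + 4).choose 4 : ℂ) * z ^ k) * hinv + w * hF3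
  exact ⟨hF1, hF2, hF3, hF4⟩

lemma trig_bridge (N n : ℕ) (hN : 2 ≤ N) (hn1 : 1 ≤ n) (hn2 : n ≤ N - 1) :
    ((1 / Real.sin (n * Real.pi / N) ^ 4 : ℝ) : ℂ)
      = 16 * (((1 - Complex.exp (2 * ↑Real.pi * Complex.I / N) ^ n)⁻¹) ^ 2
          - 2 * ((1 - Complex.exp (2 * ↑Real.pi * Complex.I / N) ^ n)⁻¹) ^ 3
          + ((1 - Complex.exp (2 * ↑Real.pi * Complex.I / N) ^ n)⁻¹) ^ 4) := by
  have hNne : N ≠ 0 := by omega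
  have hNR : (N : ℝ) ≠ 0 := Nat.cast_ne_zero.mpr hNne
  have hNC : (N : ℂ) ≠ 0 := Nat.cast_ne_zero.mpr hNne
  set ζ : ℂ := Complex.exp (2 * ↑Real.pi * Complex.I / N) with hζdef
  have hprim : IsPrimitiveRoot ζ N := Complex.isPrimitiveRoot_exp N hNne
  have hz1 : ζ ^ n ≠ 1 := hprim.pow_ne_one_of_pos_of_lt (by omega) (by omega)
  have hw : (1 : ℂ) - ζ ^ n ≠ 0 := by
    intro h; exact hz1 (by linear_combination -h)
  set θ : ℝ := n * Real.pi / N with hθdef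
  have hθpos : 0 < θ := by
    apply div_pos
    · exact mul_pos (by exact_mod_cast hn1) Real.pi_pos
    · exact_mod_cast Nat.pos_of_ne_zero hNne
  have hθlt : θ < Real.pi := by
    rw [hθdef, div_lt_iff₀ (by exact_mod_cast Nat.pos_of_ne_zero hNne)]
    have : (n : ℝ) < N := by exact_mod_cast (by omega : n < N)
    nlinarith [Real.pi_pos]
  have hs : Real.sin θ ≠ 0 := ne_of_gt (Real.sin_pos_of_pos_of_lt_pi hθpos hθlt)
  have hsC : Complex.sin (θ : ℂ) ≠ 0 := by
    rw [← Complex.ofReal_sin]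
    exact_mod_cast hs
  set u : ℂ := Complex.exp (θ * Complex.I) with hudef
  have hu : u ≠ 0 := Complex.exp_ne_zero _
  have hz : ζ ^ n = u ^ 2 := by
    rw [hζdef, hudef, ← Complex.exp_nat_mul, sq, ← Complex.exp_add]
    congr 1
    rw [hθdef]
    push_cast
    field_simp
    ring
  have hneg : Complex.exp (-(θ : ℂ) * Complex.I) = u⁻¹ := by
    rw [hudef, ← Complex.exp_neg]
    congr 1
    ring
  have hsin : Complex.sin (θ : ℂ) * u = (1 - u ^ 2) * Complex.I / 2 := by
    rw [Complex.sin, hneg]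
    field_simp
    ring
  have hsq : (1 - u ^ 2) ^ 2 = -4 * Complex.sin (θ : ℂ) ^ 2 * u ^ 2 := by
    linear_combination (4 * (Complex.sin (θ : ℂ) * u) + 2 * (1 - u ^ 2) * Complex.I) * hsin
      + (1 - u ^ 2) ^ 2 * Complex.I_sq
  rw [hz] at hw ⊢
  have h4 : (1 - u ^ 2) ^ 4 = 16 * Complex.sin (θ : ℂ) ^ 4 * u ^ 4 := by
    linear_combination ((1 - u ^ 2) ^ 2 - 4 * Complex.sin (θ : ℂ) ^ 2 * u ^ 2) * hsq
  have hv : (1 - u ^ 2) * (1 - u ^ 2)⁻¹ = 1 := mul_inv_cancel₀ hw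
  push_cast
  rw [div_eq_iff (pow_ne_zero 4 hsC)]
  linear_combination
    (-(1 + (1 - u ^ 2) * (1 - u ^ 2)⁻¹ + ((1 - u ^ 2) * (1 - u ^ 2)⁻¹) ^ 2
        + ((1 - u ^ 2) * (1 - u ^ 2)⁻¹) ^ 3)
      - 16 * Complex.sin (θ : ℂ) ^ 4 * ((1 - u ^ 2)⁻¹) ^ 2
        * (2 * (1 - u ^ 2)⁻¹ - 1 - (1 - u ^ 2) * (1 - u ^ 2)⁻¹)) * hv
    + ((1 - u ^ 2)⁻¹) ^ 4 * h4

lemma sum_F (N j : ℕ) (hN : 2 ≤ N) :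
    ∑ n ∈ Finset.Icc 1 (N - 1), ∑ k ∈ range N, ((k + j).choose j : ℂ)
        * (Complex.exp (2 * ↑Real.pi * Complex.I / N) ^ n) ^ k
      = (N : ℂ) - ((N + j).choose (j + 1) : ℂ) := by
  have hNne : N ≠ 0 := by omega
  have hNpos : 0 < N := by omega
  set ζ : ℂ := Complex.exp (2 * ↑Real.pi * Complex.I / N) with hζdef
  have hprim : IsPrimitiveRoot ζ N := Complex.isPrimitiveRoot_exp N hNne
  have hIccIco : Finset.Icc 1 (N - 1) = Finset.Ico 1 N := by
    rw [← Finset.Ico_add_one_right_eq_Icc]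
    congr 1
    omega
  rw [Finset.sum_comm]
  have hin : ∀ k ∈ range N, ∑ n ∈ Finset.Icc 1 (N - 1), ((k + j).choose j : ℂ) * (ζ ^ n) ^ k
      = ((k + j).choose j : ℂ) * (if k = 0 then (N : ℂ) - 1 else -1) := by
    intro k hk
    rw [← Finset.mul_sum]
    congr 1
    by_cases hk0 : k = 0
    · subst hk0
      simp only [pow_zero, Finset.sum_const, Nat.card_Icc, nsmul_eq_mul, mul_one, if_true]
      have : N - 1 + 1 - 1 = N - 1 := by omega
      rw [this]
      push_cast [Nat.cast_sub (by omega : 1 ≤ N)]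
      ring
    · rw [if_neg hk0]
      have hk1 : ζ ^ k ≠ 1 :=
        hprim.pow_ne_one_of_pos_of_lt (by omega) (Finset.mem_range.mp hk)
      have hg : ∑ n ∈ range N, (ζ ^ k) ^ n = 0 := by
        rw [geom_sum_eq hk1, ← pow_mul, mul_comm, pow_mul, hprim.pow_eq_one, one_pow,
          sub_self, zero_div]
      have hsw : ∀ n ∈ Finset.Icc 1 (N - 1), (ζ ^ n) ^ k = (ζ ^ k) ^ n := by
        intro n _
        rw [← pow_mul, ← pow_mul, mul_comm]
      rw [Finset.sum_congr rfl hsw]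
      have hsplit := Finset.sum_range_eq_add_Ico (fun n => (ζ ^ k) ^ n) hNpos
      rw [hg, ← hIccIco] at hsplit
      simp only [pow_zero] at hsplit
      linear_combination -hsplit
  rw [Finset.sum_congr rfl hin]
  have hsplit2 := Finset.sum_range_eq_add_Ico
    (fun k => ((k + j).choose j : ℂ) * (if k = 0 then (N : ℂ) - 1 else -1)) hNpos
  rw [hsplit2]
  norm_num
  have hIco : ∀ k ∈ Finset.Ico 1 N,
      (if k = 0 then ((k + j).choose j : ℂ) * ((N : ℂ) - 1) else -((k + j).choose j : ℂ))
      = -((k + j).choose j : ℂ) := by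
    intro k hk
    have hk' := Finset.mem_Ico.mp hk
    rw [if_neg (by omega : k ≠ 0)]
  rw [Finset.sum_congr rfl hIco]
  -- ∑ k ∈ Ico 1 N, -(c k) = -(∑ range N c - c 0)
  have hrangesum : ∑ k ∈ range N, ((k + j).choose j : ℂ) = ((N + j).choose (j + 1) : ℂ) := by
    have := Nat.sum_range_add_choose (N - 1) j
    have hN1 : N - 1 + 1 = N := by omega
    rw [hN1] at this
    rw [← Nat.cast_sum, this]
    congr 2
    omega
  have hsplit3 := Finset.sum_range_eq_add_Ico (fun k => ((k + j).choose j : ℂ)) hNpos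
  rw [hrangesum] at hsplit3
  simp only [zero_add, Nat.choose_self, Nat.cast_one] at hsplit3
  rw [Finset.sum_neg_distrib]
  linear_combination hsplit3


theorem sum_inv_sin_pow_four_cycle (N : ℕ) (hN : 2 ≤ N) :
    ∑ n ∈ Finset.Icc 1 (N - 1), 1 / Real.sin (n * Real.pi / N) ^ 4
      = ((N : ℝ) ^ 4 + 10 * (N : ℝ) ^ 2 - 11) / 45 := by
  have hNne : N ≠ 0 := by omega
  have hNC : (N : ℂ) ≠ 0 := Nat.cast_ne_zero.mpr hNne
  set ζ : ℂ := Complex.exp (2 * ↑Real.pi * Complex.I / N) with hζdef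
  have hprim : IsPrimitiveRoot ζ N := Complex.isPrimitiveRoot_exp N hNne
  set S1 := ∑ n ∈ Finset.Icc 1 (N - 1), (1 - ζ ^ n)⁻¹ with hS1def
  set S2 := ∑ n ∈ Finset.Icc 1 (N - 1), ((1 - ζ ^ n)⁻¹) ^ 2 with hS2def
  set S3 := ∑ n ∈ Finset.Icc 1 (N - 1), ((1 - ζ ^ n)⁻¹) ^ 3 with hS3def
  set S4 := ∑ n ∈ Finset.Icc 1 (N - 1), ((1 - ζ ^ n)⁻¹) ^ 4 with hS4def
  have hroots : ∀ n ∈ Finset.Icc 1 (N - 1),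
      (∑ k ∈ range N, ((k + 1).choose 1 : ℂ) * (ζ ^ n) ^ k) = -(N : ℂ) * (1 - ζ ^ n)⁻¹
      ∧ (∑ k ∈ range N, ((k + 2).choose 2 : ℂ) * (ζ ^ n) ^ k)
          = -(N : ℂ) * ((1 - ζ ^ n)⁻¹) ^ 2 - ((N + 1).choose 2 : ℂ) * (1 - ζ ^ n)⁻¹
      ∧ (∑ k ∈ range N, ((k + 3).choose 3 : ℂ) * (ζ ^ n) ^ k)
          = -(N : ℂ) * ((1 - ζ ^ n)⁻¹) ^ 3 - ((N + 1).choose 2 : ℂ) * ((1 - ζ ^ n)⁻¹) ^ 2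
            - ((N + 2).choose 3 : ℂ) * (1 - ζ ^ n)⁻¹
      ∧ (∑ k ∈ range N, ((k + 4).choose 4 : ℂ) * (ζ ^ n) ^ k)
          = -(N : ℂ) * ((1 - ζ ^ n)⁻¹) ^ 4 - ((N + 1).choose 2 : ℂ) * ((1 - ζ ^ n)⁻¹) ^ 3
            - ((N + 2).choose 3 : ℂ) * ((1 - ζ ^ n)⁻¹) ^ 2
            - ((N + 3).choose 4 : ℂ) * (1 - ζ ^ n)⁻¹ := by
    intro n hn
    simp only [Finset.mem_Icc] at hn
    have hzN : (ζ ^ n) ^ N = 1 := by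
      rw [← pow_mul, mul_comm, pow_mul, hprim.pow_eq_one, one_pow]
    have hz1 : ζ ^ n ≠ 1 := hprim.pow_ne_one_of_pos_of_lt (by omega) (by omega)
    exact per_root N hN (ζ ^ n) hzN hz1
  have E1 : (N : ℂ) - ((N + 1).choose 2 : ℂ) = -(N : ℂ) * S1 := by
    rw [← sum_F N 1 hN, hS1def, Finset.mul_sum]
    exact Finset.sum_congr rfl (fun n hn => (hroots n hn).1)
  have E2 : (N : ℂ) - ((N + 2).choose 3 : ℂ)
      = -(N : ℂ) * S2 - ((N + 1).choose 2 : ℂ) * S1 := by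
    rw [← sum_F N 2 hN, hS1def, hS2def, Finset.mul_sum, Finset.mul_sum, ← Finset.sum_sub_distrib]
    exact Finset.sum_congr rfl (fun n hn => (hroots n hn).2.1)
  have E3 : (N : ℂ) - ((N + 3).choose 4 : ℂ)
      = -(N : ℂ) * S3 - ((N + 1).choose 2 : ℂ) * S2 - ((N + 2).choose 3 : ℂ) * S1 := by
    rw [← sum_F N 3 hN, hS1def, hS2def, hS3def, Finset.mul_sum, Finset.mul_sum, Finset.mul_sum,
      ← Finset.sum_sub_distrib, ← Finset.sum_sub_distrib]
    exact Finset.sum_congr rfl (fun n hn => (hroots n hn).2.2.1)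
  have E4 : (N : ℂ) - ((N + 4).choose 5 : ℂ)
      = -(N : ℂ) * S4 - ((N + 1).choose 2 : ℂ) * S3 - ((N + 2).choose 3 : ℂ) * S2
        - ((N + 3).choose 4 : ℂ) * S1 := by
    rw [← sum_F N 4 hN, hS1def, hS2def, hS3def, hS4def, Finset.mul_sum, Finset.mul_sum,
      Finset.mul_sum, Finset.mul_sum, ← Finset.sum_sub_distrib, ← Finset.sum_sub_distrib,
      ← Finset.sum_sub_distrib]
    exact Finset.sum_congr rfl (fun n hn => (hroots n hn).2.2.2)
  have hS1 : S1 = ((N : ℂ) - 1) / 2 := by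
    apply mul_left_cancel₀ hNC
    linear_combination E1 + cc2 N / 2
  have hS2 : S2 = (6 * (N : ℂ) - (N : ℂ) ^ 2 - 5) / 12 := by
    apply mul_left_cancel₀ hNC
    linear_combination E2 + cc3 N / 6 - (((N + 1).choose 2 : ℕ) : ℂ) * hS1
      - (((N : ℂ) - 1) / 4) * cc2 N
  have hS3 : S3 = (4 * (N : ℂ) - (N : ℂ) ^ 2 - 3) / 8 := by
    apply mul_left_cancel₀ hNC
    linear_combination E3 + cc4 N / 24 - (((N + 1).choose 2 : ℕ) : ℂ) * hS2
      - (((N + 2).choose 3 : ℕ) : ℂ) * hS1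
      - ((6 * (N : ℂ) - (N : ℂ) ^ 2 - 5) / 24) * cc2 N - (((N : ℂ) - 1) / 12) * cc3 N
  have hS4 : S4 = ((N : ℂ) ^ 4 - 110 * (N : ℂ) ^ 2 + 360 * (N : ℂ) - 251) / 720 := by
    apply mul_left_cancel₀ hNC
    linear_combination E4 + cc5 N / 120 - (((N + 1).choose 2 : ℕ) : ℂ) * hS3
      - (((N + 2).choose 3 : ℕ) : ℂ) * hS2 - (((N + 3).choose 4 : ℕ) : ℂ) * hS1
      - ((4 * (N : ℂ) - (N : ℂ) ^ 2 - 3) / 16) * cc2 N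
      - ((6 * (N : ℂ) - (N : ℂ) ^ 2 - 5) / 72) * cc3 N
      - (((N : ℂ) - 1) / 48) * cc4 N
  have hBsum : ∑ n ∈ Finset.Icc 1 (N - 1), ((1 / Real.sin (n * Real.pi / N) ^ 4 : ℝ) : ℂ)
      = 16 * (S2 - 2 * S3 + S4) := by
    have hb : ∀ n ∈ Finset.Icc 1 (N - 1),
        ((1 / Real.sin (n * Real.pi / N) ^ 4 : ℝ) : ℂ)
          = 16 * (((1 - ζ ^ n)⁻¹) ^ 2 - 2 * ((1 - ζ ^ n)⁻¹) ^ 3 + ((1 - ζ ^ n)⁻¹) ^ 4) := by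
      intro n hn
      simp only [Finset.mem_Icc] at hn
      exact trig_bridge N n hN hn.1 hn.2
    rw [Finset.sum_congr rfl hb, hS2def, hS3def, hS4def, ← Finset.mul_sum]
    congr 1
    rw [Finset.sum_add_distrib, Finset.sum_sub_distrib, Finset.mul_sum]
  have hcast : ((∑ n ∈ Finset.Icc 1 (N - 1), 1 / Real.sin (n * Real.pi / N) ^ 4 : ℝ) : ℂ)
      = ∑ n ∈ Finset.Icc 1 (N - 1), ((1 / Real.sin (n * Real.pi / N) ^ 4 : ℝ) : ℂ) :=
    Complex.ofReal_sum _ _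
  rw [← Complex.ofReal_inj, hcast, hBsum, hS2, hS3, hS4]
  push_cast
  ring
end

section
/- For all integers N ≥ 2, one has Σ_{n=1}^{N−1} 1/sin⁴(nπ/(2N)) = 4(2N⁴ + 5N² − 7)/45. -/
open Finset Real Polynomial Polynomial.Chebyshev


lemma cheb_data (n : ℕ) :
    ((U ℝ n).eval 1 = (n:ℝ) + 1) ∧
    ((derivative (U ℝ n)).eval 1 * 3 = (n:ℝ) * (n+1) * (n+2)) ∧
    ((derivative (derivative (U ℝ n))).eval 1 * 15 = ((n:ℝ) - 1) * n * (n+1) * (n+2) * (n+3)) ∧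
    (U ℝ n).natDegree ≤ n := by
  induction n using Nat.strong_induction_on with
  | _ n ih =>
    match n with
    | 0 => norm_num [U_zero]
    | 1 => norm_num [U_one]
    | (m+2) =>
      obtain ⟨a0, b0, c0, d0⟩ := ih m (by omega)
      obtain ⟨a1, b1, c1, d1⟩ := ih (m+1) (by omega)
      have key : U ℝ ((m+2 : ℕ) : ℤ) = 2 * X * U ℝ ((m+1:ℕ) : ℤ) - U ℝ (m : ℕ) := by
        push_cast
        exact U_add_two ℝ m
      rw [key]
      refine ⟨?_, ?_, ?_, ?_⟩
      · push_cast at a0 a1 ⊢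
        simp only [eval_sub, eval_mul, eval_ofNat, eval_X, a0, a1]
        ring
      · push_cast at a1 b0 b1 ⊢
        simp only [derivative_sub, derivative_mul, derivative_X, derivative_ofNat,
          eval_sub, eval_add, eval_mul, eval_ofNat, eval_X, eval_one, eval_zero]
        nlinarith [a1, b0, b1]
      · push_cast at a1 b1 c0 c1 ⊢
        simp only [derivative_sub, derivative_add, derivative_mul, derivative_X,
          derivative_ofNat, derivative_one, derivative_zero, eval_sub, eval_add, eval_mul,
          eval_ofNat, eval_X, eval_one, eval_zero]
        nlinarith [a1, b1, c0, c1]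
      · calc (2 * X * U ℝ ((m+1:ℕ):ℤ) - U ℝ (m:ℕ)).natDegree
            ≤ max (2 * X * U ℝ ((m+1:ℕ):ℤ)).natDegree (U ℝ (m:ℕ)).natDegree :=
              natDegree_sub_le _ _
          _ ≤ m + 2 := by
              refine max_le ?_ (by omega)
              calc (2 * X * U ℝ ((m+1:ℕ):ℤ)).natDegree
                  ≤ (2*X : ℝ[X]).natDegree + (U ℝ ((m+1:ℕ):ℤ)).natDegree := natDegree_mul_le
                _ ≤ 1 + (m+1) := by
                    gcongr
                    · exact (natDegree_C_mul_le 2 X).trans (by simp)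
                _ = m + 2 := by omega



lemma esymm_two_cons (a : ℝ) (s : Multiset ℝ) :
    (a ::ₘ s).esymm 2 = a * s.sum + s.esymm 2 := by
  simp [Multiset.esymm, Multiset.powersetCard_cons, Multiset.powersetCard_one,
    Multiset.map_map, Function.comp]
  rw [add_comm]
  congr 1
  simpa using Multiset.sum_map_mul_left (s := s) (a := a) (f := fun x => x)

lemma sq_sum_multiset (s : Multiset ℝ) :
    s.sum ^ 2 = (s.map (fun x => x ^ 2)).sum + 2 * s.esymm 2 := by
  induction s using Multiset.induction_on with
  | empty => simp [Multiset.esymm, Multiset.powersetCard_zero_right]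
  | cons a s ih =>
    rw [Multiset.sum_cons, Multiset.map_cons, Multiset.sum_cons, esymm_two_cons]
    ring_nf
    ring_nf at ih
    linarith [ih]

lemma esymm_one_multiset (s : Multiset ℝ) : s.esymm 1 = s.sum := by
  simp [Multiset.esymm, Multiset.powersetCard_one, Multiset.map_map, Function.comp]

set_option maxHeartbeats 2000000 in
theorem sum_inv_sin_pow_four_path (N : ℕ) (hN : 2 ≤ N) :
    ∑ n ∈ Finset.Icc 1 (N - 1), 1 / Real.sin (n * Real.pi / (2 * N)) ^ 4
      = 4 * (2 * (N : ℝ) ^ 4 + 5 * (N : ℝ) ^ 2 - 7) / 45 := by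
  rcases eq_or_lt_of_le hN with h2 | h3
  · -- N = 2
    subst h2
    rw [show (2:ℕ) - 1 = 1 from rfl, Finset.Icc_self, Finset.sum_singleton]
    have harg : ((1:ℕ):ℝ) * π / (2 * ((2:ℕ):ℝ)) = π / 4 := by push_cast; ring
    rw [harg, Real.sin_pi_div_four]
    have h2' : (Real.sqrt 2) ^ 2 = 2 := Real.sq_sqrt (by norm_num)
    have : (Real.sqrt 2 / 2) ^ 4 = 1 / 4 := by
      rw [div_pow]
      rw [show (4:ℕ) = 2 * 2 from rfl, pow_mul, h2']
      norm_num
    rw [this]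
    norm_num
  have hN : 3 ≤ N := h3
  have hNR : (0:ℝ) < N := by positivity
  set d := N - 1 with hd
  have hd1 : 1 ≤ d := by omega
  set p : ℝ[X] := (U ℝ (d : ℤ)).comp (1 - 2 * X) with hp
  set q : ℝ[X] := ∑ i ∈ range (d+1), monomial i (p.coeff (d - i)) with hq
  -- basic angle facts
  have hθ : ∀ n ∈ Icc 1 d, 0 < (n:ℝ) * π / (2*N) ∧ (n:ℝ) * π / (2*N) < π/2 := by
    intro n hn
    rw [mem_Icc] at hn
    have hn1 : (1:ℝ) ≤ (n:ℝ) := by exact_mod_cast hn.1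
    constructor
    · apply div_pos (by nlinarith [Real.pi_pos]) (by positivity)
    · rw [div_lt_iff₀ (by positivity)]
      have : (n:ℝ) < N := by exact_mod_cast (by omega : n < N)
      nlinarith [Real.pi_pos]
  have hsin : ∀ n ∈ Icc 1 d, 0 < Real.sin ((n:ℝ) * π / (2*N)) := by
    intro n hn
    obtain ⟨h1, h2⟩ := hθ n hn
    exact Real.sin_pos_of_pos_of_lt_pi h1 (h2.trans (by linarith [Real.pi_pos]))
  -- roots of p
  have hp_root : ∀ n ∈ Icc 1 d, p.eval (Real.sin ((n:ℝ) * π / (2*N)) ^ 2) = 0 := by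
    intro n hn
    rw [mem_Icc] at hn
    have hcos : (1 : ℝ) - 2 * Real.sin ((n:ℝ) * π / (2*N)) ^ 2
        = Real.cos (2 * ((n:ℝ) * π / (2*N))) := by
      rw [Real.cos_two_mul]
      nlinarith [Real.sin_sq_add_cos_sq ((n:ℝ) * π / (2*N))]
    have hsinφ : Real.sin (2 * ((n:ℝ) * π / (2*N))) ≠ 0 := by
      apply ne_of_gt
      apply Real.sin_pos_of_pos_of_lt_pi
      · have := (hθ n (by rw [mem_Icc]; exact hn)).1; linarith
      · have h2 := (hθ n (by rw [mem_Icc]; exact hn)).2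
        linarith
    have key := Polynomial.Chebyshev.U_real_cos (2 * ((n:ℝ) * π / (2*N))) (d : ℤ)
    have hang : ((d : ℝ) + 1) * (2 * ((n:ℝ) * π / (2*N))) = n * π := by
      have : (d : ℝ) + 1 = N := by
        have : ((d : ℕ) : ℝ) = (N : ℝ) - 1 := by
          rw [hd]; push_cast [Nat.cast_sub (by omega : 1 ≤ N)]; ring
        rw [this]; ring
      rw [this]; field_simp
    rw [hp, Polynomial.eval_comp]
    simp only [Polynomial.eval_sub, Polynomial.eval_one, Polynomial.eval_mul,
      Polynomial.eval_ofNat, Polynomial.eval_X]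
    rw [hcos]
    have : eval (Real.cos (2 * ((n:ℝ) * π / (2*N)))) (U ℝ (d:ℤ))
        * Real.sin (2 * ((n:ℝ) * π / (2*N))) = 0 := by
      rw [key]
      push_cast at hang ⊢
      rw [hang]
      exact Real.sin_nat_mul_pi n
    exact (mul_eq_zero.mp this).resolve_right hsinφ
  -- degree of p
  have cheb := cheb_data d
  have hpdeg : p.natDegree ≤ d := by
    have h1 : ((1:ℝ[X]) - 2*X).natDegree = 1 := by
      have : ((1:ℝ[X]) - 2*X) = C (-2) * X + C 1 := by
        simp only [map_neg, map_one, map_ofNat]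
        ring
      rw [this, Polynomial.natDegree_linear (by norm_num)]
    calc p.natDegree ≤ (U ℝ (d:ℤ)).natDegree * ((1:ℝ[X]) - 2*X).natDegree :=
          Polynomial.natDegree_comp_le
      _ ≤ d := by rw [h1, mul_one]; exact cheb.2.2.2
  -- coefficients of p
  have hp0 : p.coeff 0 = (N : ℝ) := by
    rw [Polynomial.coeff_zero_eq_eval_zero, hp, Polynomial.eval_comp]
    simp only [Polynomial.eval_sub, Polynomial.eval_one, Polynomial.eval_mul,
      Polynomial.eval_ofNat, Polynomial.eval_X, mul_zero, sub_zero]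
    rw [cheb.1]
    push_cast [Nat.cast_sub (by omega : 1 ≤ N)]
    rw [hd, Nat.cast_sub (by omega : 1 ≤ N)]; push_cast; ring
  have hpd : derivative p = ((-2 : ℝ[X])) * (derivative (U ℝ (d:ℤ))).comp (1 - 2*X) := by
    rw [hp, Polynomial.derivative_comp]
    congr 1
    simp [Polynomial.derivative_sub]
  have hp1 : p.coeff 1 = -2 * (derivative (U ℝ (d:ℤ))).eval 1 := by
    have h1 := Polynomial.coeff_derivative p 0
    norm_num at h1
    rw [Polynomial.coeff_zero_eq_eval_zero, hpd] at h1
    simp only [Polynomial.eval_mul, Polynomial.eval_comp, Polynomial.eval_sub,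
      Polynomial.eval_one, Polynomial.eval_ofNat, Polynomial.eval_X, Polynomial.eval_neg,
      mul_zero, sub_zero] at h1

    linarith [h1]
  have hp2 : p.coeff 2 * 2 = 4 * (derivative (derivative (U ℝ (d:ℤ)))).eval 1 := by
    have hdd : derivative (derivative p)
        = ((4 : ℝ[X])) * (derivative (derivative (U ℝ (d:ℤ)))).comp (1 - 2*X) := by
      rw [hpd, Polynomial.derivative_mul, Polynomial.derivative_comp]
      simp only [Polynomial.derivative_sub, Polynomial.derivative_one,
        Polynomial.derivative_mul, Polynomial.derivative_X, Polynomial.derivative_ofNat,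
        Polynomial.derivative_neg]
      ring_nf
    have h1 := Polynomial.coeff_derivative (derivative p) 0
    have h2 := Polynomial.coeff_derivative p 1
    norm_num at h1 h2
    rw [Polynomial.coeff_zero_eq_eval_zero, hdd] at h1
    simp only [Polynomial.eval_mul, Polynomial.eval_comp, Polynomial.eval_sub,
      Polynomial.eval_one, Polynomial.eval_ofNat, Polynomial.eval_X,
      mul_zero, sub_zero] at h1

    nlinarith [h1, h2]
  -- q coefficients
  have hq_coeff : ∀ j, j ≤ d → q.coeff j = p.coeff (d - j) := by
    intro j hj
    rw [hq, Polynomial.finset_sum_coeff]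
    rw [Finset.sum_eq_single j]
    · rw [Polynomial.coeff_monomial, if_pos rfl]
    · intro i _ hij
      rw [Polynomial.coeff_monomial, if_neg hij]
    · intro h
      exact absurd (Finset.mem_range.mpr (by omega)) h
  -- q evaluation
  have hq_eval : ∀ x : ℝ, x ≠ 0 → q.eval x = x ^ d * p.eval (1/x) := by
    intro x hx
    rw [hq, Polynomial.eval_finset_sum]
    simp only [Polynomial.eval_monomial]
    rw [Polynomial.eval_eq_sum_range' (lt_of_le_of_lt hpdeg (Nat.lt_succ_self d)), Finset.mul_sum]
    rw [← Finset.sum_range_reflect]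
    apply Finset.sum_congr rfl
    intro i hi
    rw [Finset.mem_range] at hi
    have hid : i ≤ d := by omega
    have e0 : d + 1 - 1 - i = d - i := by omega
    have e1 : d - (d - i) = i := by omega
    rw [e0, e1]
    have e2 : x ^ d = x ^ (d-i) * x ^ i := by rw [← pow_add]; congr 1; omega
    rw [e2]
    field_simp
    simp [hx]
  -- degree of q
  have hqd : q.coeff d = (N:ℝ) := by
    rw [hq_coeff d le_rfl, Nat.sub_self, hp0]
  have hqne : q ≠ 0 := fun h => by
    rw [h, Polynomial.coeff_zero] at hqd
    exact absurd hqd.symm (by positivity)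
  have hq_natDeg : q.natDegree = d := by
    apply le_antisymm
    · rw [hq]
      apply Polynomial.natDegree_sum_le_of_forall_le
      intro i hi
      exact (Polynomial.natDegree_monomial_le _).trans (by
        rw [Finset.mem_range] at hi; omega)
    · apply Polynomial.le_natDegree_of_ne_zero
      rw [hqd]
      positivity
  have hq_lead : q.leadingCoeff = (N:ℝ) := by
    rw [Polynomial.leadingCoeff, hq_natDeg, hqd]
  -- the roots
  set r : ℕ → ℝ := fun n => 1 / Real.sin ((n:ℝ) * π / (2*N)) ^ 2 with hr
  have hq_root : ∀ n ∈ Icc 1 d, q.eval (r n) = 0 := by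
    intro n hn
    have hs := hsin n hn
    have hrne : r n ≠ 0 := by rw [hr]; positivity
    rw [hq_eval _ hrne, hr]
    have : 1 / ((1:ℝ) / Real.sin ((n:ℝ) * π / (2*N)) ^ 2)
        = Real.sin ((n:ℝ) * π / (2*N)) ^ 2 := by
      field_simp
    rw [this, hp_root n hn, mul_zero]
  -- injectivity
  have hr_inj : ∀ m ∈ Icc 1 d, ∀ n ∈ Icc 1 d, r m = r n → m = n := by
    intro m hm n hn hmn
    have hsm := hsin m hm
    have hsn := hsin n hn
    have hmn' : 1 / Real.sin ((m:ℝ) * π / (2*N)) ^ 2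
        = 1 / Real.sin ((n:ℝ) * π / (2*N)) ^ 2 := hmn
    rw [one_div, one_div, inv_inj] at hmn'
    have h2 : Real.sin ((m:ℝ) * π / (2*N)) = Real.sin ((n:ℝ) * π / (2*N)) := by
      nlinarith [hmn', hsm, hsn]
    have hmem1 : (m:ℝ) * π / (2*N) ∈ Set.Icc (-(π/2)) (π/2) :=
      Set.mem_Icc.mpr ⟨by linarith [(hθ m hm).1, Real.pi_pos], le_of_lt (hθ m hm).2⟩
    have hmem2 : (n:ℝ) * π / (2*N) ∈ Set.Icc (-(π/2)) (π/2) :=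
      Set.mem_Icc.mpr ⟨by linarith [(hθ n hn).1, Real.pi_pos], le_of_lt (hθ n hn).2⟩
    have h3 := Real.injOn_sin hmem1 hmem2 h2
    have h5 : (m:ℝ) * π = (n:ℝ) * π := by
      have h6 := congrArg (fun x : ℝ => x * (2*N)) h3
      simp only [div_mul_cancel₀ _ (by positivity : (2*(N:ℝ)) ≠ 0)] at h6
      exact h6
    exact_mod_cast mul_right_cancel₀ (ne_of_gt Real.pi_pos) h5
  -- roots multiset
  set M : Multiset ℝ := (Icc 1 d).val.map r with hM
  have hM_nodup : M.Nodup := by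
    rw [hM]
    exact Multiset.Nodup.map_on (fun x hx y hy h => hr_inj x hx y hy h) (Icc 1 d).nodup
  have hM_card : Multiset.card M = d := by
    rw [hM, Multiset.card_map]
    show (Icc 1 d).card = d
    rw [Nat.card_Icc]
    omega
  have hM_le : M ≤ q.roots := by
    rw [Multiset.le_iff_subset hM_nodup]
    intro x hx
    rw [hM, Multiset.mem_map] at hx
    obtain ⟨n, hn, rfl⟩ := hx
    rw [Polynomial.mem_roots hqne]
    exact hq_root n hn
  have hroots : q.roots = M := by
    refine (Multiset.eq_of_le_of_card_le hM_le ?_).symm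
    rw [hM_card]
    exact hq_natDeg ▸ q.card_roots'
  have hroots_card : Multiset.card q.roots = q.natDegree := by
    rw [hroots, hM_card, hq_natDeg]
  -- Vieta
  have hv1 := Polynomial.coeff_eq_esymm_roots_of_card hroots_card
    (k := d-1) (by rw [hq_natDeg]; omega)
  have hv2 := Polynomial.coeff_eq_esymm_roots_of_card hroots_card
    (k := d-2) (by rw [hq_natDeg]; omega)
  rw [hq_natDeg, hq_lead, hroots] at hv1 hv2
  have ed1 : d - (d-1) = 1 := by omega
  have ed2 : d - (d-2) = 2 := by omega
  rw [ed1] at hv1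
  rw [ed2] at hv2
  rw [hq_coeff (d-1) (by omega), ed1, hp1, esymm_one_multiset] at hv1
  rw [hq_coeff (d-2) (by omega), ed2] at hv2
  set A := eval 1 (derivative (U ℝ (d:ℤ))) with hA
  set B := eval 1 (derivative (derivative (U ℝ (d:ℤ)))) with hB
  have hsum : M.sum = 2*A/(N:ℝ) := by
    norm_num at hv1
    field_simp
    linarith [hv1]
  have hesymm2 : M.esymm 2 = 2*B/(N:ℝ) := by
    have h2 : p.coeff 2 = 2*B := by linarith [hp2]
    rw [h2] at hv2
    norm_num at hv2
    field_simp
    linarith [hv2]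
  have hps : (M.map (fun x => x^2)).sum = M.sum^2 - 2 * M.esymm 2 := by
    linarith [sq_sum_multiset M]
  have hterm : ∀ n ∈ Icc 1 d, 1 / Real.sin ((n:ℝ)*π/(2*(N:ℝ)))^4 = (r n)^2 := by
    intro n hn
    rw [hr]
    simp only
    rw [div_pow, one_pow, ← pow_mul]
  have hLHS : ∑ n ∈ Icc 1 d, 1 / Real.sin ((n:ℝ)*π/(2*(N:ℝ)))^4
      = (M.map (fun x => x^2)).sum := by
    rw [Finset.sum_congr rfl hterm, hM, Multiset.map_map]
    rfl
  rw [hLHS, hps, hsum, hesymm2]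
  have hdR : (d:ℝ) = (N:ℝ) - 1 := by
    rw [hd]
    push_cast [Nat.cast_sub (by omega : 1 ≤ N)]
    ring
  have hA3 : A * 3 = ((N:ℝ)-1) * (((N:ℝ)-1)+1) * (((N:ℝ)-1)+2) := by
    rw [← hdR]; exact cheb.2.1
  have hB15 : B * 15
      = (((N:ℝ)-1)-1) * ((N:ℝ)-1) * (((N:ℝ)-1)+1) * (((N:ℝ)-1)+2) * (((N:ℝ)-1)+3) := by
    rw [← hdR]; exact cheb.2.2.1
  have hAv : A = ((N:ℝ)-1)*(N:ℝ)*((N:ℝ)+1)/3 := by linear_combination hA3 / 3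
  have hBv : B = ((N:ℝ)-2)*((N:ℝ)-1)*(N:ℝ)*((N:ℝ)+1)*((N:ℝ)+2)/15 := by
    linear_combination hB15 / 15
  rw [hAv, hBv]
  have hNne : (N:ℝ) ≠ 0 := ne_of_gt hNR
  field_simp
  ring
end
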